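/- arXiv:1511.09194 — 3 statements merged into one kernel-verified Lean document; each statement's English description precedes it below -/
import Mathlib

section
/- Let σ be a primitive substitution, β an eigenvalue of its matrix M with |β| > 1 such that β/|β| is not a root of unity, and γ a nonzero eigenvector for β. For any a ∈ 𝒜, if x ∈ 𝒮_a is eventually periodic (there exist n₀ ≥ 0 and q ≥ 1 with (p_{n₀+kq+m}^x, c_{n₀+kq+m}^x, s_{n₀+kq+m}^x) independent of k ≥ 0 for each 1 ≤ m ≤ q), then z_a(x) is not an extreme point of 𝔉_a for any direction τ ∈ S¹, i.e. z_a(x) ∉ E_a(τ) for all τ ∈ S¹. -/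
open Complex MeasureTheory Filter Set
open scoped BigOperators

noncomputable section

namespace IEMWandering

/-- The half-open unit interval `[0,1)`. -/
def unitIvl : Set ℝ := Set.Ico (0:ℝ) 1

/-- An interval exchange map on `[0,1)`: a bijection of `[0,1)` that is a translation
on each member of a finite partition of `[0,1)` into half-open intervals. -/
structure IEM (A : Type) [Fintype A] where
  T : ℝ → ℝ
  I : A → Set ℝ
  δ : A → ℝ
  isIco : ∀ a, ∃ l u : ℝ, l < u ∧ I a = Set.Ico l u
  subset_unit : ∀ a, I a ⊆ unitIvl
  partition : ∀ t ∈ unitIvl, ∃! a, t ∈ I a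
  translate : ∀ a, ∀ t ∈ I a, T t = t + δ a
  bijOn : Set.BijOn T unitIvl unitIvl

/-- `substIter σ n a = σⁿ(a)`. -/
def substIter {A : Type} (σ : A → List A) : ℕ → A → List A
  | 0, a => [a]
  | n+1, a => ((σ a).map (substIter σ n)).flatten

/-- Applying a substitution to a word. -/
def substW {A : Type} (σ : A → List A) (w : List A) : List A := (w.map σ).flatten

/-- `substIterW σ k w = σᵏ(w)`. -/
def substIterW {A : Type} (σ : A → List A) (k : ℕ) (w : List A) : List A :=
  (substW σ)^[k] w

/-- A substitution is primitive if some power of it maps every letter to a word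
containing every letter. -/
def Primitive {A : Type} (σ : A → List A) : Prop :=
  ∃ n : ℕ, ∀ a b : A, a ∈ substIter σ n b

/-- The matrix `M` of a substitution: `M a b` = number of occurrences of `b` in `σ a`. -/
def substMatrix {A : Type} [Fintype A] [DecidableEq A] (σ : A → List A) :
    Matrix A A ℂ := fun a b => ((σ a).count b : ℂ)

/-- `γ(w) = γ_{w_0} + … + γ_{w_{n-1}}`. -/
def wordSum {A : Type} (γ : A → ℂ) (w : List A) : ℂ := (w.map γ).sum

/-- `γ` is an eigenvector of the substitution matrix for the eigenvalue `β`. -/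
def IsEigenvector {A : Type} [Fintype A] [DecidableEq A] (σ : A → List A) (β : ℂ)
    (γ : A → ℂ) : Prop :=
  γ ≠ 0 ∧ (substMatrix σ).mulVec γ = β • γ

/-- `z` is not a root of unity. -/
def NotRootOfUnity (z : ℂ) : Prop := ∀ n : ℕ, 0 < n → z ^ n ≠ 1

/-- `β/|β|`. -/
def unitDir (β : ℂ) : ℂ := β / ((‖β‖ : ℝ) : ℂ)

/-- A self-similar interval exchange map, together with its renormalization ratio `α`
and its associated substitution `σ`: the first-return map of `T` to `[0,α)`, rescaled
by `α⁻¹`, equals `T`; `(σ a).length` is the first return time `r_a` of `α I_a` to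
`[0,α)` and `T^[m] (α I_a) ⊆ I_{(σ a)_m}` for `m < r_a`. -/
structure SelfSimilarIEM (A : Type) [Fintype A] extends IEM A where
  α : ℝ
  α_pos : 0 < α
  α_lt_one : α < 1
  σ : A → List A
  σ_ne : ∀ a, σ a ≠ []
  visits : ∀ a, ∀ t ∈ I a, ∀ (m : ℕ) (h : m < (σ a).length),
    T^[m] (α * t) ∈ I ((σ a).get ⟨m, h⟩)
  not_first_return : ∀ a, ∀ t ∈ I a, ∀ k : ℕ, 0 < k → k < (σ a).length →
    T^[k] (α * t) ∉ Set.Ico (0:ℝ) α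
  self_similar : ∀ a, ∀ t ∈ I a, T^[(σ a).length] (α * t) = α * T t

/-- An affine interval exchange map on `[0,1)` with positive slopes. -/
structure AffineIEM (A : Type) [Fintype A] where
  f : ℝ → ℝ
  J : A → Set ℝ
  slope : A → ℝ
  intercept : A → ℝ
  slope_pos : ∀ a, 0 < slope a
  isIco : ∀ a, ∃ l u : ℝ, l < u ∧ J a = Set.Ico l u
  subset_unit : ∀ a, J a ⊆ unitIvl
  partition : ∀ t ∈ unitIvl, ∃! a, t ∈ J a
  affine : ∀ a, ∀ t ∈ J a, f t = slope a * t + intercept a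
  bijOn : Set.BijOn f unitIvl unitIvl

/-- `h` realizes a semi-conjugacy from `f` to `T`:
it is continuous, surjective, nondecreasing and `h ∘ f = T ∘ h` on `[0,1)`. -/
def SemiConjWith (T f h : ℝ → ℝ) : Prop :=
  ContinuousOn h unitIvl ∧ Set.SurjOn h unitIvl unitIvl ∧ MonotoneOn h unitIvl ∧
    Set.MapsTo h unitIvl unitIvl ∧ ∀ t ∈ unitIvl, h (f t) = T (h t)

/-- `f` is semi-conjugate with `T`. -/
def SemiConjugate (T f : ℝ → ℝ) : Prop := ∃ h, SemiConjWith T f h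

/-- `f` has a wandering interval: a nondegenerate interval whose forward iterates
are pairwise disjoint. -/
def HasWanderingInterval (f : ℝ → ℝ) : Prop :=
  ∃ u v : ℝ, u < v ∧ Set.Ico u v ⊆ unitIvl ∧
    ∀ m n : ℕ, m ≠ n → Disjoint (f^[m] '' Set.Ico u v) (f^[n] '' Set.Ico u v)

/-- Membership in the substitution subshift `Ω_σ`: every finite subword of `ω`
occurs in some `σⁿ(a)`. -/
def InOmega {A : Type} (σ : A → List A) (ω : ℤ → A) : Prop :=
  ∀ (m : ℤ) (len : ℕ), ∃ (n : ℕ) (a : A),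
    (List.ofFn fun i : Fin len => ω (m + (i.val : ℤ))) <:+: substIter σ n a

/-- The word `ω_n … ω_m`. -/
def segment {A : Type} (ω : ℤ → A) (n m : ℤ) : List A :=
  List.ofFn fun i : Fin (m - n + 1).toNat => ω (n + (i.val : ℤ))

/-- `γ_n(ω)`: the Birkhoff-like sums of `γ` along `ω`. -/
def gammaZ {A : Type} (γ : A → ℂ) (ω : ℤ → A) (n : ℤ) : ℂ :=
  if 0 ≤ n then ∑ i ∈ Finset.range n.toNat, γ (ω (i : ℤ))
  else -∑ i ∈ Finset.range (-n).toNat, γ (ω (n + (i : ℤ)))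

/-- `ω` is a minimal sequence for `γ`. -/
def MinimalSeq {A : Type} (σ : A → List A) (γ : A → ℂ) (ω : ℤ → A) : Prop :=
  InOmega σ ω ∧ ∀ n : ℤ, 0 ≤ (gammaZ γ ω n).re

/-- Triples `(p, c, s)` of a prefix, a central letter and a suffix. -/
abbrev Triple (A : Type) := List A × A × List A

/-- The set `𝒮_a` of reversed prefix-suffix expansions at `a` (indexed from `0`,
so `x m` is the triple `(p_{m+1}, c_{m+1}, s_{m+1})`). -/
def InS {A : Type} (σ : A → List A) (a : A) (x : ℕ → Triple A) : Prop :=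
  σ a = (x 0).1 ++ (x 0).2.1 :: (x 0).2.2 ∧
  ∀ m : ℕ, σ ((x m).2.1) = (x (m+1)).1 ++ (x (m+1)).2.1 :: (x (m+1)).2.2

/-- `z_a(x) = Σ_{m≥1} β^{-m} γ(p_m)`. -/
def zrep {A : Type} (β : ℂ) (γ : A → ℂ) (x : ℕ → Triple A) : ℂ :=
  ∑' m : ℕ, β⁻¹ ^ (m + 1) * wordSum γ (x m).1

/-- `z_a^{(n)}(x) = Σ_{m=1}^n β^{-m} γ(p_m)`. -/
def zrepN {A : Type} (β : ℂ) (γ : A → ℂ) (n : ℕ) (x : ℕ → Triple A) : ℂ :=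
  ∑ m ∈ Finset.range n, β⁻¹ ^ (m + 1) * wordSum γ (x m).1

/-- The fractal `𝔉_a`. -/
def Frac {A : Type} (σ : A → List A) (β : ℂ) (γ : A → ℂ) (a : A) : Set ℂ :=
  { z | ∃ x, InS σ a x ∧ zrep β γ x = z }

/-- The finite approximation `𝔉_a^{(n)}`. -/
def FracN {A : Type} (σ : A → List A) (β : ℂ) (γ : A → ℂ) (n : ℕ) (a : A) : Set ℂ :=
  { z | ∃ x, InS σ a x ∧ zrepN β γ n x = z }

/-- `v_a(τ) = min_{z ∈ 𝔉_a} Re(τ z)`. -/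
def vDir {A : Type} (σ : A → List A) (β : ℂ) (γ : A → ℂ) (a : A) (τ : ℂ) : ℝ :=
  sInf ((fun z => (τ * z).re) '' Frac σ β γ a)

/-- `v_a^{(n)}(τ) = min_{z ∈ 𝔉_a^{(n)}} Re(τ z)`. -/
def vDirN {A : Type} (σ : A → List A) (β : ℂ) (γ : A → ℂ) (n : ℕ) (a : A) (τ : ℂ) : ℝ :=
  sInf ((fun z => (τ * z).re) '' FracN σ β γ n a)

/-- The set `E_a(τ)` of extreme points of `𝔉_a` in direction `τ`. -/
def ExtPts {A : Type} (σ : A → List A) (β : ℂ) (γ : A → ℂ) (a : A) (τ : ℂ) : Set ℂ :=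
  { z ∈ Frac σ β γ a | (τ * z).re = vDir σ β γ a τ }

/-- The set `E_a^{(n)}(τ)`. -/
def ExtPtsN {A : Type} (σ : A → List A) (β : ℂ) (γ : A → ℂ) (n : ℕ) (a : A) (τ : ℂ) : Set ℂ :=
  { z ∈ FracN σ β γ n a | (τ * z).re = vDirN σ β γ n a τ }

/-- The unique representation property: every extreme point of every fractal `𝔉_a`
has a unique representation in `𝒮_a`. -/
def URP {A : Type} (σ : A → List A) (β : ℂ) (γ : A → ℂ) : Prop :=
  ∀ (a : A) (τ : ℂ), ‖τ‖ = 1 →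
    ∀ z ∈ ExtPts σ β γ a τ, ∀ x y : ℕ → Triple A,
      InS σ a x → zrep β γ x = z → InS σ a y → zrep β γ y = z → x = y

/-- `(p,c,s)` is a decomposition of `σ(a)`. -/
def IsDecomp {A : Type} (σ : A → List A) (a : A) (d : Triple A) : Prop :=
  σ a = d.1 ++ d.2.1 :: d.2.2

/-- The subfractal `𝔉_{a,(p,c,s)}`: values of representations starting with `(p,c,s)`. -/
def FracDec {A : Type} (σ : A → List A) (β : ℂ) (γ : A → ℂ) (a : A) (d : Triple A) :
    Set ℂ := { z | ∃ x, InS σ a x ∧ x 0 = d ∧ zrep β γ x = z }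

/-- `v_{a,(p,c,s)}(τ)`. -/
def vDec {A : Type} (σ : A → List A) (β : ℂ) (γ : A → ℂ) (a : A) (d : Triple A)
    (τ : ℂ) : ℝ := sInf ((fun z => (τ * z).re) '' FracDec σ β γ a d)

/-- `E_{a,(p,c,s)}(τ) = E_a(τ) ∩ 𝔉_{a,(p,c,s)}`. -/
def EDec {A : Type} (σ : A → List A) (β : ℂ) (γ : A → ℂ) (a : A) (d : Triple A)
    (τ : ℂ) : Set ℂ := ExtPts σ β γ a τ ∩ FracDec σ β γ a d

/-- The set `Ψ_a` of directions with extreme points in two distinct subfractals. -/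
def Psi {A : Type} (σ : A → List A) (β : ℂ) (γ : A → ℂ) (a : A) : Set ℂ :=
  { τ | ‖τ‖ = 1 ∧ ∃ d d' : Triple A, d ≠ d' ∧
      IsDecomp σ a d ∧ IsDecomp σ a d' ∧
      EDec σ β γ a d τ ≠ EDec σ β γ a d' τ ∧
      vDir σ β γ a τ = vDec σ β γ a d τ ∧ vDir σ β γ a τ = vDec σ β γ a d' τ }

/-- The natural (arc) distance between two points of the unit circle. -/
def arcDist (τ τ' : ℂ) : ℝ := |Complex.arg (τ / τ')|

/-- A good eigenvector: directions in `Ψ(γ)` are badly approximated by the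
orbit of `β₀ = β/|β|`. -/
def GoodEigenvector {A : Type} [Fintype A] [DecidableEq A] (σ : A → List A) (β : ℂ)
    (γ : A → ℂ) : Prop :=
  ∀ C : ℝ, 1 < C → ∀ τ ∈ ⋃ a : A, Psi σ β γ a,
    0 < Filter.liminf
      (fun n : ℕ => ((C ^ n * arcDist τ ((unitDir β) ^ n) : ℝ) : EReal)) Filter.atTop

/-- The left shift on sequences of triples. -/
def shiftS {A : Type} (x : ℕ → Triple A) : ℕ → Triple A := fun m => x (m + 1)

/-- The set `E_a^*(τ)` of limit extreme points. -/
def LimitExt {A : Type} (σ : A → List A) (β : ℂ) (γ : A → ℂ) (a : A) (τ : ℂ) :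
    Set ℂ :=
  { z | z ∈ ExtPts σ β γ a τ ∧ ∃ x, InS σ a x ∧ zrep β γ x = z ∧
      ∀ j : ℕ, 0 < j → ∃ (aj : A) (y : ℕ → Triple A), InS σ aj y ∧
        zrep β γ y ∈ ExtPts σ β γ aj ((unitDir β) ^ j * τ) ∧
        (y (j - 1)).2.1 = a ∧ (fun m => y (m + j)) = x }

/-- Minimality of an i.e.m.: every (forward) orbit is dense in `[0,1)`. -/
def MinimalIEM {A : Type} [Fintype A] (T : IEM A) : Prop :=
  ∀ t ∈ unitIvl, ∀ s ∈ unitIvl, ∀ ε : ℝ, 0 < ε → ∃ n : ℕ, |T.T^[n] t - s| < ε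

/-- `ω` is the itinerary of a full (two-sided) orbit of `T`. -/
def IsItinerary {A : Type} [Fintype A] (T : IEM A) (ω : ℤ → A) : Prop :=
  ∃ o : ℤ → ℝ, (∀ n, o n ∈ unitIvl) ∧ (∀ n, T.T (o n) = o (n + 1)) ∧
    ∀ n, o n ∈ T.I (ω n)

/-- Membership in `Ω_T`, the closure (in the product topology) of the set of
itineraries of points of `[0,1)` under `T`. -/
def InOmegaT {A : Type} [Fintype A] (T : IEM A) (ω : ℤ → A) : Prop :=
  ∀ N : ℕ, ∃ ω', IsItinerary T ω' ∧ ∀ n : ℤ, |n| ≤ (N : ℤ) → ω' n = ω n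

/-- The orientation-preserving exchange of the two halves of `[t₀, t₁)`. -/
def halfExchange (t₀ t₁ t : ℝ) : ℝ :=
  if t₀ ≤ t ∧ t < (t₀ + t₁) / 2 then t + (t₁ - t₀) / 2
  else if (t₀ + t₁) / 2 ≤ t ∧ t < t₁ then t - (t₁ - t₀) / 2
  else t

/-- The cubic Arnoux–Yoccoz interval exchange map. -/
def AYmap (α : ℝ) : ℝ → ℝ := fun t =>
  halfExchange 0 1 (halfExchange 0 α (halfExchange α (α + α^2)
    (halfExchange (α + α^2) 1 t)))

/-- The cubic Arnoux–Yoccoz substitution on `{1, …, 9}` (letters `0`-indexed):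
`σ(1)=35, σ(2)=45, σ(3)=46, σ(4)=17, σ(5)=18, σ(6)=19, σ(7)=29, σ(8)=2, σ(9)=3`. -/
def AYsub : Fin 9 → List (Fin 9) :=
  ![[2,4],[3,4],[3,5],[0,6],[0,7],[0,8],[1,8],[1],[2]]

/-- The eigenvector of the Arnoux–Yoccoz matrix for the eigenvalue `β`. -/
def AYvec (β : ℂ) : Fin 9 → ℂ :=
  ![β^2+β+1, -β, -β, -β^2-β-1, β+1, β+1, -β^2-β-2, -1, -1]

end IEMWandering

noncomputable def Complex.abs : AbsoluteValue ℂ ℝ := NormedField.toAbsoluteValue ℂ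

theorem Complex.norm_eq_abs (z : ℂ) : ‖z‖ = Complex.abs z := rfl

theorem Complex.abs_ofReal (r : ℝ) : Complex.abs (r : ℂ) = |r| := by
  rw [← Complex.norm_eq_abs]; exact Complex.norm_real r

theorem Complex.abs_conj (z : ℂ) : Complex.abs ((starRingEnd ℂ) z) = Complex.abs z :=
  Complex.norm_conj z

theorem Complex.abs_I : Complex.abs Complex.I = 1 := Complex.norm_I

theorem Complex.abs_mul_exp_arg_mul_I (x : ℂ) :
    ((Complex.abs x : ℝ) : ℂ) * Complex.exp (x.arg * Complex.I) = x :=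
  Complex.norm_mul_exp_arg_mul_I x

theorem Complex.abs_re_le_abs (z : ℂ) : |z.re| ≤ Complex.abs z := Complex.abs_re_le_norm z

theorem Complex.re_le_abs (z : ℂ) : z.re ≤ Complex.abs z := Complex.re_le_norm z

theorem Complex.sq_abs (z : ℂ) : Complex.abs z ^ 2 = Complex.normSq z := Complex.sq_norm z

theorem Complex.abs_exp_sub_one_le {x : ℂ} (hx : Complex.abs x ≤ 1) :
    Complex.abs (Complex.exp x - 1) ≤ 2 * Complex.abs x := Complex.norm_exp_sub_one_le hx

namespace PNE
open IEMWandering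

set_option linter.unusedSectionVars false
set_option linter.unusedVariables false

variable {A : Type} [Fintype A] [DecidableEq A]

/-- bound for word sums of prefixes. -/
def Gc (σ : A → List A) (γ : A → ℂ) : ℝ :=
  ∑ c : A, ((σ c).map (fun b => Complex.abs (γ b))).sum

def Rc (σ : A → List A) (β : ℂ) (γ : A → ℂ) : ℝ :=
  ∑' m : ℕ, Gc σ γ * ((Complex.abs β)⁻¹) ^ (m + 1)

lemma abs_wordSum_le (γ : A → ℂ) (l : List A) :
    Complex.abs (wordSum γ l) ≤ (l.map (fun b => Complex.abs (γ b))).sum := by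
  induction l with
  | nil => simp [wordSum]
  | cons a l ih =>
      simp only [wordSum, List.map_cons, List.sum_cons] at *
      exact (Complex.abs.add_le _ _).trans (by linarith)

lemma wordSum_prefix_le (σ : A → List A) (γ : A → ℂ) (c : A) (p rest : List A)
    (h : σ c = p ++ rest) : Complex.abs (wordSum γ p) ≤ Gc σ γ := by
  refine (abs_wordSum_le γ p).trans ?_
  have h1 : (p.map (fun b => Complex.abs (γ b))).sum
      ≤ ((σ c).map (fun b => Complex.abs (γ b))).sum := by
    rw [h, List.map_append, List.sum_append]
    have : (0:ℝ) ≤ (rest.map (fun b => Complex.abs (γ b))).sum :=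
      List.sum_nonneg (by intro x hx; simp at hx; obtain ⟨b, _, rfl⟩ := hx; positivity)
    linarith
  refine h1.trans ?_
  exact Finset.single_le_sum (f := fun c => ((σ c).map (fun b => Complex.abs (γ b))).sum)
    (fun i _ => List.sum_nonneg (by intro x hx; simp at hx; obtain ⟨b, _, rfl⟩ := hx; positivity))
    (Finset.mem_univ c)

lemma InS_prefix {σ : A → List A} {a : A} {x : ℕ → Triple A} (hx : InS σ a x) (m : ℕ) :
    ∃ c rest, σ c = (x m).1 ++ rest := by
  cases m with
  | zero => exact ⟨a, _, hx.1⟩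
  | succ m => exact ⟨(x m).2.1, _, hx.2 m⟩

lemma norm_term_le {σ : A → List A} {β : ℂ} {γ : A → ℂ} {a : A} {x : ℕ → Triple A}
    (hβ : 1 < Complex.abs β) (hx : InS σ a x) (m : ℕ) :
    ‖β⁻¹ ^ (m + 1) * wordSum γ (x m).1‖ ≤ Gc σ γ * ((Complex.abs β)⁻¹) ^ (m + 1) := by
  obtain ⟨c, rest, hc⟩ := InS_prefix hx m
  have h1 : Complex.abs (wordSum γ (x m).1) ≤ Gc σ γ := wordSum_prefix_le σ γ c _ _ hc
  rw [Complex.norm_eq_abs, map_mul, map_pow, map_inv₀]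
  rw [mul_comm (Gc σ γ)]
  exact mul_le_mul_of_nonneg_left h1 (by positivity)

lemma summable_aux {σ : A → List A} {β : ℂ} (γ : A → ℂ) (hβ : 1 < Complex.abs β) :
    Summable (fun m : ℕ => Gc σ γ * ((Complex.abs β)⁻¹) ^ (m + 1)) := by
  have hr0 : (0:ℝ) ≤ (Complex.abs β)⁻¹ := by positivity
  have hr1 : (Complex.abs β)⁻¹ < 1 := inv_lt_one_of_one_lt₀ hβ
  have := (summable_geometric_of_lt_one hr0 hr1).mul_left (Gc σ γ * (Complex.abs β)⁻¹)
  refine this.congr fun m => ?_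
  ring

lemma summable_zrep {σ : A → List A} {β : ℂ} {γ : A → ℂ} {a : A} {x : ℕ → Triple A}
    (hβ : 1 < Complex.abs β) (hx : InS σ a x) :
    Summable (fun m : ℕ => β⁻¹ ^ (m + 1) * wordSum γ (x m).1) :=
  Summable.of_norm_bounded (summable_aux γ hβ) (norm_term_le hβ hx)

lemma zrep_abs_le {σ : A → List A} {β : ℂ} {γ : A → ℂ} {a : A} {x : ℕ → Triple A}
    (hβ : 1 < Complex.abs β) (hx : InS σ a x) :
    Complex.abs (zrep β γ x) ≤ Rc σ β γ := by
  rw [← Complex.norm_eq_abs, zrep]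
  have hnorm : Summable (fun m : ℕ => ‖β⁻¹ ^ (m + 1) * wordSum γ (x m).1‖) :=
    (summable_aux γ hβ).of_nonneg_of_le (fun _ => norm_nonneg _) (norm_term_le hβ hx)
  refine (norm_tsum_le_tsum_norm hnorm).trans ?_
  exact Summable.tsum_le_tsum (norm_term_le hβ hx) hnorm (summable_aux γ hβ)

lemma mem_Frac {σ : A → List A} {β : ℂ} {γ : A → ℂ} {a : A} {x : ℕ → Triple A}
    (hx : InS σ a x) : zrep β γ x ∈ Frac σ β γ a := ⟨x, hx, rfl⟩

lemma frac_bddBelow {σ : A → List A} {β : ℂ} {γ : A → ℂ} {c : A} {τ : ℂ}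
    (hβ : 1 < Complex.abs β) (hτ : Complex.abs τ = 1) :
    BddBelow ((fun z => (τ * z).re) '' Frac σ β γ c) := by
  refine ⟨-Rc σ β γ, ?_⟩
  rintro y ⟨z, ⟨x, hx, rfl⟩, rfl⟩
  have h1 : Complex.abs (zrep β γ x) ≤ Rc σ β γ := zrep_abs_le hβ hx
  have h2 : -Complex.abs (τ * zrep β γ x) ≤ (τ * zrep β γ x).re := by
    have := Complex.abs_re_le_abs (τ * zrep β γ x)
    cases abs_le.mp this with | intro l r => linarith
  have h3 : Complex.abs (τ * zrep β γ x) = Complex.abs (zrep β γ x) := by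
    rw [map_mul, hτ, one_mul]
  simp only [h3] at h2
  linarith

lemma ext_le {σ : A → List A} {β : ℂ} {γ : A → ℂ} {c : A} {τ : ℂ} {z w : ℂ}
    (hβ : 1 < Complex.abs β) (hτ : Complex.abs τ = 1)
    (hz : z ∈ ExtPts σ β γ c τ) (hw : w ∈ Frac σ β γ c) : (τ * z).re ≤ (τ * w).re := by
  rw [hz.2]
  exact csInf_le (frac_bddBelow hβ hτ) ⟨w, hw, rfl⟩

lemma ext_mk {σ : A → List A} {β : ℂ} {γ : A → ℂ} {c : A} {τ : ℂ} {z : ℂ}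
    (hβ : 1 < Complex.abs β) (hτ : Complex.abs τ = 1) (hz : z ∈ Frac σ β γ c)
    (hmin : ∀ w ∈ Frac σ β γ c, (τ * z).re ≤ (τ * w).re) : z ∈ ExtPts σ β γ c τ := by
  refine ⟨hz, le_antisymm ?_ (csInf_le (frac_bddBelow hβ hτ) ⟨z, hz, rfl⟩)⟩
  refine le_csInf ⟨_, ⟨z, hz, rfl⟩⟩ ?_
  rintro y ⟨w, hw, rfl⟩
  exact hmin w hw

lemma shift_InS {σ : A → List A} {a : A} {x : ℕ → Triple A} (hx : InS σ a x) :
    InS σ ((x 0).2.1) (shiftS x) := ⟨hx.2 0, fun m => hx.2 (m+1)⟩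

def consT (d : Triple A) (y : ℕ → Triple A) : ℕ → Triple A := fun m => Nat.casesOn m d y

lemma shiftS_consT (d : Triple A) (y : ℕ → Triple A) : shiftS (consT d y) = y := rfl

lemma cons_InS {σ : A → List A} {a : A} {d : Triple A} {y : ℕ → Triple A}
    (hd : σ a = d.1 ++ d.2.1 :: d.2.2) (hy : InS σ d.2.1 y) : InS σ a (consT d y) := by
  refine ⟨hd, fun m => ?_⟩
  cases m with
  | zero => exact hy.1
  | succ m => exact hy.2 m

lemma zrep_shift {σ : A → List A} {β : ℂ} {γ : A → ℂ} {a : A} {x : ℕ → Triple A}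
    (hβ : 1 < Complex.abs β) (hx : InS σ a x) :
    zrep β γ x = β⁻¹ * (wordSum γ (x 0).1 + zrep β γ (shiftS x)) := by
  have hs := summable_zrep (γ := γ) hβ hx
  rw [zrep, hs.tsum_eq_zero_add]
  have h1 : ∑' (m : ℕ), β⁻¹ ^ (m + 1 + 1) * wordSum γ (x (m + 1)).1
      = β⁻¹ * zrep β γ (shiftS x) := by
    rw [zrep, ← tsum_mul_left]
    refine tsum_congr fun m => ?_
    show β⁻¹ ^ (m + 2) * wordSum γ (x (m+1)).1 = β⁻¹ * (β⁻¹ ^ (m + 1) * wordSum γ ((shiftS x) m).1)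
    rw [shiftS]
    ring
  rw [h1, pow_one, mul_add]

lemma zrep_cons {σ : A → List A} {β : ℂ} {γ : A → ℂ} {a : A} {d : Triple A} {y : ℕ → Triple A}
    (hβ : 1 < Complex.abs β) (hd : σ a = d.1 ++ d.2.1 :: d.2.2) (hy : InS σ d.2.1 y) :
    zrep β γ (consT d y) = β⁻¹ * (wordSum γ d.1 + zrep β γ y) := by
  have := zrep_shift (γ := γ) hβ (cons_InS hd hy)
  rwa [shiftS_consT] at this

lemma abs_unitDir {β : ℂ} (hβ : 1 < Complex.abs β) : Complex.abs (unitDir β) = 1 := by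
  have h0 : Complex.abs β ≠ 0 := by positivity
  rw [unitDir, map_div₀, Complex.abs_ofReal, _root_.abs_of_nonneg (norm_nonneg β),
    Complex.norm_eq_abs, div_self h0]

lemma ext_shift {σ : A → List A} {β : ℂ} {γ : A → ℂ} {a : A} {τ : ℂ} {x : ℕ → Triple A}
    (hβ : 1 < Complex.abs β) (hτ : Complex.abs τ = 1) (hx : InS σ a x)
    (hz : zrep β γ x ∈ ExtPts σ β γ a τ) :
    zrep β γ (shiftS x) ∈ ExtPts σ β γ ((x 0).2.1) (τ * (unitDir β)⁻¹) := by
  have hβ0 : β ≠ 0 := by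
    intro h; rw [h] at hβ; simp at hβ; linarith
  have habs0 : Complex.abs β ≠ 0 := by positivity
  have hτ' : Complex.abs (τ * (unitDir β)⁻¹) = 1 := by
    rw [map_mul, map_inv₀, abs_unitDir hβ, hτ]; norm_num
  set τ' := τ * (unitDir β)⁻¹ with hτ'def
  have habsC : ((Complex.abs β : ℝ) : ℂ) ≠ 0 := by
    simpa using habs0
  have key : β⁻¹ = (((Complex.abs β)⁻¹ : ℝ) : ℂ) * (unitDir β)⁻¹ := by
    rw [unitDir, inv_div, Complex.norm_eq_abs]
    push_cast
    field_simp
  have hscale : ∀ W : ℂ, τ * (β⁻¹ * W) = (((Complex.abs β)⁻¹ : ℝ) : ℂ) * (τ' * W) := by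
    intro W
    rw [hτ'def, key]
    ring
  have hre : ∀ W : ℂ, (τ * (β⁻¹ * W)).re = (Complex.abs β)⁻¹ * (τ' * W).re := by
    intro W; rw [hscale W, Complex.re_ofReal_mul]
  apply ext_mk hβ hτ' (mem_Frac (shift_InS hx))
  rintro w ⟨y, hy, rfl⟩
  have hyc : InS σ a (consT (x 0) y) := cons_InS hx.1 hy
  have hle : (τ * zrep β γ x).re ≤ (τ * zrep β γ (consT (x 0) y)).re :=
    ext_le hβ hτ hz (mem_Frac hyc)
  rw [zrep_shift hβ hx, zrep_cons hβ hx.1 hy, hre, hre] at hle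
  have hpos : (0:ℝ) < (Complex.abs β)⁻¹ := by positivity
  have := (mul_le_mul_iff_right₀ hpos).mp hle
  rw [mul_add, mul_add, Complex.add_re, Complex.add_re] at this
  linarith

lemma shiftS_iter_apply : ∀ (n : ℕ) (x : ℕ → Triple A) (m : ℕ),
    (shiftS^[n] x) m = x (n + m) := by
  intro n
  induction n with
  | zero => intro x m; simp
  | succ n ih =>
      intro x m
      rw [Function.iterate_succ_apply]
      rw [ih (shiftS x) m]
      show x (n + m + 1) = x (n + 1 + m)
      congr 1
      omega

def baseL (a : A) (x : ℕ → Triple A) : ℕ → A := fun n => Nat.casesOn n a (fun m => (x m).2.1)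

lemma ext_iter {σ : A → List A} {β : ℂ} {γ : A → ℂ} {a : A} {τ : ℂ} {x : ℕ → Triple A}
    (hβ : 1 < Complex.abs β) (hτ : Complex.abs τ = 1) (hx : InS σ a x)
    (hz : zrep β γ x ∈ ExtPts σ β γ a τ) :
    ∀ n : ℕ, InS σ (baseL a x n) (shiftS^[n] x) ∧
      zrep β γ (shiftS^[n] x) ∈ ExtPts σ β γ (baseL a x n) (τ * ((unitDir β)⁻¹) ^ n) := by
  intro n
  induction n with
  | zero =>
      constructor
      · exact hx
      · simpa [baseL] using hz
  | succ n ih =>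
      obtain ⟨h1, h2⟩ := ih
      have hτn : Complex.abs (τ * ((unitDir β)⁻¹) ^ n) = 1 := by
        rw [map_mul, map_pow, map_inv₀, abs_unitDir hβ, hτ]; norm_num
      have h3 := ext_shift hβ hτn h1 h2
      have he0 : ((shiftS^[n] x) 0).2.1 = (x n).2.1 := by
        rw [shiftS_iter_apply n x 0, Nat.add_zero]
      have hbase : baseL a x (n+1) = ((shiftS^[n] x) 0).2.1 := by
        rw [he0]; rfl
      constructor
      · rw [Function.iterate_succ_apply', hbase]
        exact shift_InS h1
      · rw [Function.iterate_succ_apply', hbase]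
        have : τ * ((unitDir β)⁻¹) ^ (n+1) = τ * ((unitDir β)⁻¹) ^ n * (unitDir β)⁻¹ := by
          rw [pow_succ]; ring
        rw [this]
        exact h3

lemma exists_pow_near_one {η : ℂ} (hη : Complex.abs η = 1)
    (hnr : ∀ n : ℕ, 0 < n → η ^ n ≠ 1) {ε : ℝ} (hε : 0 < ε) :
    ∃ d : ℕ, 1 ≤ d ∧ Complex.abs (η ^ d - 1) < ε := by
  have hmem : ∀ k : ℕ, η ^ k ∈ Metric.sphere (0:ℂ) 1 := by
    intro k
    simp [Metric.mem_sphere, dist_zero_right, Complex.norm_eq_abs, map_pow, hη]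
  obtain ⟨L, _, φ, hφ, hconv⟩ := (isCompact_sphere (0:ℂ) 1).tendsto_subseq hmem
  rw [Metric.tendsto_atTop] at hconv
  obtain ⟨N, hN⟩ := hconv (ε/2) (by linarith)
  have h1 := hN N le_rfl
  have h2 := hN (N+1) (by omega)
  have hlt : φ N < φ (N+1) := hφ (by omega)
  refine ⟨φ (N+1) - φ N, by omega, ?_⟩
  have hd : φ N + (φ (N+1) - φ N) = φ (N+1) := by omega
  have habsk : Complex.abs (η ^ φ N) = 1 := by rw [map_pow, hη, one_pow]
  have : Complex.abs (η ^ φ N) * Complex.abs (η ^ (φ (N+1) - φ N) - 1)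
      = Complex.abs (η ^ φ (N+1) - η ^ φ N) := by
    rw [← map_mul, mul_sub, mul_one, ← pow_add, hd]
  rw [habsk, one_mul] at this
  rw [this]
  calc Complex.abs (η ^ φ (N+1) - η ^ φ N)
      = dist (η ^ φ (N+1)) (η ^ φ N) := by rw [Complex.dist_eq]; rfl
    _ ≤ dist (η ^ φ (N+1)) L + dist L (η ^ φ N) := dist_triangle _ _ _
    _ < ε/2 + ε/2 := by rw [dist_comm L]; exact add_lt_add h2 h1
    _ = ε := by ring

lemma exists_zpow_near {η : ℂ} (hη : Complex.abs η = 1)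
    (hnr : ∀ n : ℕ, 0 < n → η ^ n ≠ 1) (ζ : ℂ) (hζ : Complex.abs ζ = 1)
    {ε : ℝ} (hε : 0 < ε) : ∃ m : ℤ, Complex.abs (η ^ m - ζ) < ε := by
  have hη0 : η ≠ 0 := by intro h; rw [h] at hη; simp at hη
  have hηexp : Complex.exp (η.arg * Complex.I) = η := by
    have := Complex.abs_mul_exp_arg_mul_I η
    rwa [hη, Complex.ofReal_one, one_mul] at this
  have hζexp : Complex.exp (ζ.arg * Complex.I) = ζ := by
    have := Complex.abs_mul_exp_arg_mul_I ζ
    rwa [hζ, Complex.ofReal_one, one_mul] at this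
  set θ := η.arg
  set t := ζ.arg
  have hπ : (0:ℝ) < 2 * Real.pi := by positivity
  have hdense : Dense ((AddSubgroup.closure ({θ, 2 * Real.pi} : Set ℝ) : AddSubgroup ℝ) : Set ℝ) := by
    rcases AddSubgroup.dense_or_cyclic (AddSubgroup.closure ({θ, 2 * Real.pi} : Set ℝ)) with h | ⟨g, hg⟩
    · exact h
    · exfalso
      have hθmem : θ ∈ AddSubgroup.closure ({θ, 2 * Real.pi} : Set ℝ) :=
        AddSubgroup.subset_closure (by simp)
      have hπmem : 2 * Real.pi ∈ AddSubgroup.closure ({θ, 2 * Real.pi} : Set ℝ) :=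
        AddSubgroup.subset_closure (by simp)
      rw [hg, AddSubgroup.mem_closure_singleton] at hθmem hπmem
      obtain ⟨m, hm⟩ := hθmem
      obtain ⟨n, hn⟩ := hπmem
      have hn0 : n ≠ 0 := by
        rintro rfl; simp at hn
      have hkey : (n : ℝ) * θ = (m : ℝ) * (2 * Real.pi) := by
        rw [← hm, ← hn]
        push_cast [zsmul_eq_mul]
        ring
      have hroot : η ^ (n : ℤ) = 1 := by
        rw [← hηexp, ← Complex.exp_int_mul]
        have : (n : ℂ) * (θ * Complex.I) = (m : ℂ) * (2 * Real.pi * Complex.I) := by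
          have := congrArg (fun r : ℝ => (r : ℂ) * Complex.I) hkey
          push_cast at this ⊢
          ring_nf at this ⊢
          exact this
        rw [this, Complex.exp_int_mul_two_pi_mul_I]
      have : η ^ n.natAbs = 1 := by
        rcases Int.natAbs_eq n with h | h
        · rw [← zpow_natCast, ← h, hroot]
        · have hneg : ((n.natAbs : ℤ)) = -n := by omega
          rw [← zpow_natCast, hneg, zpow_neg, hroot, inv_one]
      exact hnr n.natAbs (by omega) this
  set δ : ℝ := min 1 (ε/4) with hδdef
  have hδ : 0 < δ := by
    apply lt_min one_pos; linarith
  obtain ⟨s, hsmem, hst⟩ := Metric.mem_closure_iff.mp (hdense t) δ hδ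
  obtain ⟨m, n, hmn⟩ := AddSubgroup.mem_closure_pair.mp hsmem
  refine ⟨m, ?_⟩
  have hexp_s : Complex.exp (s * Complex.I) = η ^ m := by
    rw [← hmn]
    push_cast [zsmul_eq_mul]
    rw [add_mul, Complex.exp_add]
    have e1 : (m : ℂ) * θ * Complex.I = (m : ℤ) * (θ * Complex.I) := by push_cast; ring
    have e2 : (n : ℂ) * (2 * Real.pi) * Complex.I = (n : ℤ) * (2 * Real.pi * Complex.I) := by
      push_cast; ring
    rw [e1, e2, Complex.exp_int_mul, hηexp, Complex.exp_int_mul_two_pi_mul_I, mul_one]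
  have hdiff : η ^ m - ζ = ζ * (Complex.exp ((s - t) * Complex.I) - 1) := by
    rw [← hexp_s, ← hζexp]
    rw [mul_sub, mul_one, ← Complex.exp_add]
    congr 2
    push_cast
    ring
  rw [hdiff, map_mul, hζ, one_mul]
  have habs_st : Complex.abs ((s - t : ℝ) * Complex.I) = |s - t| := by
    rw [map_mul, Complex.abs_I, mul_one, Complex.abs_ofReal]
  have hst' : |s - t| < δ := by
    rw [← Real.dist_eq, dist_comm]; exact hst
  have h1 : Complex.abs (((s - t : ℝ) : ℂ) * Complex.I) ≤ 1 := by
    rw [habs_st]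
    exact le_of_lt (lt_of_lt_of_le hst' (min_le_left _ _))
  have := Complex.abs_exp_sub_one_le (x := ((s - t : ℝ) : ℂ) * Complex.I) h1
  have h2 : Complex.abs (Complex.exp (((s-t:ℝ)) * Complex.I) - 1) ≤ 2 * |s - t| := by
    calc Complex.abs (Complex.exp (((s-t:ℝ)) * Complex.I) - 1)
        ≤ 2 * Complex.abs (((s - t : ℝ) : ℂ) * Complex.I) := this
      _ = 2 * |s - t| := by rw [habs_st]
  calc Complex.abs (Complex.exp ((↑s - ↑t) * Complex.I) - 1)
      = Complex.abs (Complex.exp (((s-t:ℝ)) * Complex.I) - 1) := by push_cast; ring_nf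
    _ ≤ 2 * |s - t| := h2
    _ < 2 * δ := by linarith
    _ ≤ 2 * (ε/4) := by have := min_le_right 1 (ε/4); linarith [hδdef ▸ this]
    _ < ε := by linarith

lemma telescope_pow {η : ℂ} (hη : Complex.abs η = 1) (d : ℕ) :
    ∀ N : ℕ, Complex.abs (η ^ (N * d) - 1) ≤ N * Complex.abs (η ^ d - 1) := by
  intro N
  induction N with
  | zero => simp
  | succ N ih =>
      have hid0 : η ^ ((N+1) * d) = η ^ (N * d) * η ^ d := by
        rw [add_mul, one_mul, pow_add]
      have hid : η ^ ((N+1) * d) - 1 = η ^ (N * d) * (η ^ d - 1) + (η ^ (N * d) - 1) := by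
        rw [hid0]; ring
      rw [hid]
      calc Complex.abs (η ^ (N * d) * (η ^ d - 1) + (η ^ (N * d) - 1))
          ≤ Complex.abs (η ^ (N * d) * (η ^ d - 1)) + Complex.abs (η ^ (N * d) - 1) :=
            Complex.abs.add_le _ _
        _ ≤ 1 * Complex.abs (η ^ d - 1) + N * Complex.abs (η ^ d - 1) := by
            rw [map_mul, map_pow, hη, one_pow]
            exact add_le_add le_rfl ih
        _ = (N + 1 : ℕ) * Complex.abs (η ^ d - 1) := by push_cast; ring

lemma exists_nat_pow_near {η : ℂ} (hη : Complex.abs η = 1)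
    (hnr : ∀ n : ℕ, 0 < n → η ^ n ≠ 1) (ζ : ℂ) (hζ : Complex.abs ζ = 1)
    {ε : ℝ} (hε : 0 < ε) : ∃ k : ℕ, 1 ≤ k ∧ Complex.abs (η ^ k - ζ) < ε := by
  have hη0 : η ≠ 0 := by intro h; rw [h] at hη; simp at hη
  obtain ⟨m, hm⟩ := exists_zpow_near hη hnr ζ hζ (half_pos hε)
  set N : ℕ := (1 - m).toNat + 1 with hNdef
  have hN1 : 1 ≤ N := by omega
  have hNm : 1 ≤ m + N := by
    have := Int.self_le_toNat (1 - m)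
    omega
  have hN0 : (0:ℝ) < N := by exact_mod_cast hN1
  obtain ⟨d, hd1, hd⟩ := exists_pow_near_one hη hnr (ε := ε / (2 * N)) (by positivity)
  have hk0 : (0:ℤ) ≤ m + N * d := by
    have : (N:ℤ) ≤ (N:ℤ) * d := by
      have : (1:ℤ) ≤ d := by exact_mod_cast hd1
      nlinarith
    omega
  refine ⟨(m + N * d).toNat, ?_, ?_⟩
  · have : (N:ℤ) ≤ (N:ℤ) * d := by
      have : (1:ℤ) ≤ d := by exact_mod_cast hd1
      nlinarith
    omega
  have hzpow : η ^ ((m + N * d).toNat) = η ^ (m + (N:ℤ) * d) := by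
    rw [← zpow_natCast, Int.toNat_of_nonneg hk0]
  rw [hzpow]
  have hsplit : η ^ (m + (N:ℤ) * d) - ζ
      = η ^ m * (η ^ (N * d) - 1) + (η ^ m - ζ) := by
    rw [zpow_add₀ hη0]
    have : η ^ ((N:ℤ) * d) = η ^ (N * d) := by
      rw [← zpow_natCast]
      norm_cast
    rw [this]
    ring
  rw [hsplit]
  have habsm : Complex.abs (η ^ m) = 1 := by
    rw [map_zpow₀, hη, one_zpow]
  calc Complex.abs (η ^ m * (η ^ (N * d) - 1) + (η ^ m - ζ))
      ≤ Complex.abs (η ^ m * (η ^ (N * d) - 1)) + Complex.abs (η ^ m - ζ) :=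
        Complex.abs.add_le _ _
    _ ≤ 1 * (N * Complex.abs (η ^ d - 1)) + Complex.abs (η ^ m - ζ) := by
        rw [map_mul, habsm]
        exact add_le_add (by simpa using (telescope_pow hη d N)) le_rfl
    _ < N * (ε / (2 * N)) + ε / 2 := by
        rw [one_mul]
        have h1 : (N:ℝ) * Complex.abs (η ^ d - 1) < N * (ε / (2 * N)) := by
          exact (mul_lt_mul_iff_right₀ hN0).mpr hd
        linarith
    _ = ε := by field_simp; ring

lemma count_sum (γ : A → ℂ) (l : List A) :
    ∑ b : A, (l.count b : ℂ) * γ b = wordSum γ l := by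
  induction l with
  | nil => simp [wordSum]
  | cons a l ih =>
      have : ∀ b : A, ((a :: l).count b : ℂ) * γ b
          = (l.count b : ℂ) * γ b + (if b = a then γ b else 0) := by
        intro b
        rw [List.count_cons]
        by_cases h : b = a
        · simp [h]; push_cast; ring
        · have : (a == b) = false := by
            simp [beq_iff_eq]; exact fun hh => h hh.symm
          simp [this, h]
      rw [Finset.sum_congr rfl (fun b _ => this b), Finset.sum_add_distrib, ih]
      rw [Finset.sum_ite_eq' Finset.univ a γ]
      simp [wordSum, add_comm]

lemma sigma_ne_nil {σ : A → List A} {a : A} {x : ℕ → Triple A}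
    (hprim : Primitive σ) (hx : InS σ a x) : ∀ c : A, σ c ≠ [] := by
  intro c hc
  obtain ⟨n, hn⟩ := hprim
  cases n with
  | zero =>
      have h1 := hn a c
      simp [substIter] at h1
      rw [h1] at hx
      have := hx.1
      rw [hc] at this
      simp at this
  | succ n =>
      have h1 := hn a c
      have : substIter σ (n+1) c = [] := by
        show ((σ c).map (substIter σ n)).flatten = []
        rw [hc]
        simp
      rw [this] at h1
      simp at h1

/-- canonical chain of letters -/
def chainC (σ : A → List A) (hne : ∀ c, σ c ≠ []) (b : A) : ℕ → A :=
  fun n => Nat.rec b (fun _ c => (σ c).head (hne c)) n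

def xcan (σ : A → List A) (hne : ∀ c, σ c ≠ []) (b : A) : ℕ → Triple A :=
  fun m => ([], chainC σ hne b (m+1), (σ (chainC σ hne b m)).tail)

lemma xcan_InS (σ : A → List A) (hne : ∀ c, σ c ≠ []) (b : A) :
    InS σ b (xcan σ hne b) := by
  constructor
  · show σ b = [] ++ (σ (chainC σ hne b 0)).head _ :: (σ (chainC σ hne b 0)).tail
    simp only [List.nil_append]
    exact (List.cons_head_tail _).symm
  · intro m
    show σ (chainC σ hne b (m+1))
        = [] ++ (σ (chainC σ hne b (m+1))).head _ :: (σ (chainC σ hne b (m+1))).tail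
    simp only [List.nil_append]
    exact (List.cons_head_tail _).symm

/-- one-step propagation of the singleton property -/
lemma step_singleton {σ : A → List A} {β : ℂ} {γ : A → ℂ} {c : A}
    (hβ : 1 < Complex.abs β)
    (hsub : ∀ z ∈ Frac σ β γ c, ∀ z' ∈ Frac σ β γ c, z = z')
    {p s : List A} {b : A} (hdec : σ c = p ++ b :: s) :
    ∀ z ∈ Frac σ β γ b, ∀ z' ∈ Frac σ β γ b, z = z' := by
  have hβ0 : β ≠ 0 := by
    intro h; rw [h] at hβ; simp at hβ; linarith
  rintro z ⟨y, hy, rfl⟩ z' ⟨y', hy', rfl⟩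
  have h1 : zrep β γ (consT (p, b, s) y) ∈ Frac σ β γ c := ⟨_, cons_InS hdec hy, rfl⟩
  have h2 : zrep β γ (consT (p, b, s) y') ∈ Frac σ β γ c := ⟨_, cons_InS hdec hy', rfl⟩
  have heq := hsub _ h1 _ h2
  rw [zrep_cons hβ hdec hy, zrep_cons hβ hdec hy'] at heq
  have := mul_left_cancel₀ (inv_ne_zero hβ0) heq
  exact add_left_cancel this

lemma iter_singleton {σ : A → List A} {β : ℂ} {γ : A → ℂ}
    (hβ : 1 < Complex.abs β) :
    ∀ (n : ℕ) (c : A), (∀ z ∈ Frac σ β γ c, ∀ z' ∈ Frac σ β γ c, z = z') →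
      ∀ b ∈ substIter σ n c, ∀ z ∈ Frac σ β γ b, ∀ z' ∈ Frac σ β γ b, z = z' := by
  intro n
  induction n with
  | zero =>
      intro c hc b hb
      simp [substIter] at hb
      rwa [hb]
  | succ n ih =>
      intro c hc b hb
      have : b ∈ ((σ c).map (substIter σ n)).flatten := hb
      rw [List.mem_flatten] at this
      obtain ⟨l, hl, hbl⟩ := this
      rw [List.mem_map] at hl
      obtain ⟨c', hc', rfl⟩ := hl
      obtain ⟨p, s, hps⟩ := List.append_of_mem hc'
      exact ih c' (step_singleton hβ hc hps) b hbl

end PNE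

/-- **Lemma 5.7.** Eventually periodic elements of `𝒮_a` do not produce extreme
points of `𝔉_a` in any direction. -/
theorem periodic_not_extreme {A : Type} [Fintype A] [DecidableEq A]
    (σ : A → List A) (hprim : IEMWandering.Primitive σ)
    (β : ℂ) (γ : A → ℂ) (hβ : 1 < ‖β‖)
    (hβ0 : IEMWandering.NotRootOfUnity (IEMWandering.unitDir β))
    (hγ : IEMWandering.IsEigenvector σ β γ)
    (a : A) (x : ℕ → IEMWandering.Triple A) (hx : IEMWandering.InS σ a x)
    (hper : ∃ n₀ q : ℕ, 0 < q ∧ ∀ k m : ℕ, m < q → x (n₀ + k * q + m) = x (n₀ + m)) :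
    ∀ τ : ℂ, ‖τ‖ = 1 →
      IEMWandering.zrep β γ x ∉ IEMWandering.ExtPts σ β γ a τ := by
  classical
  intro τ hτ hmem
  replace hβ : 1 < Complex.abs β := hβ
  replace hτ : Complex.abs τ = 1 := hτ
  have hβne : β ≠ 0 := by
    intro h; rw [h] at hβ; simp at hβ; linarith
  have hu1 : Complex.abs (IEMWandering.unitDir β) = 1 := PNE.abs_unitDir hβ
  have hδc1 : Complex.abs ((IEMWandering.unitDir β)⁻¹) = 1 := by rw [map_inv₀, hu1]; norm_num
  obtain ⟨n₀, q, hq, hper⟩ := hper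
  -- general periodicity
  have hperiod : ∀ k m : ℕ, x (n₀ + k * q + m) = x (n₀ + m) := by
    intro k m
    obtain ⟨j, r, hr, hm⟩ : ∃ j r, r < q ∧ m = j * q + r :=
      ⟨m / q, m % q, Nat.mod_lt _ hq, by
        rw [Nat.mul_comm]; exact (Nat.div_add_mod m q).symm⟩
    have e1 : n₀ + k * q + m = n₀ + (k + j) * q + r := by rw [hm]; ring
    have e2 : n₀ + j * q + r = n₀ + m := by rw [hm, Nat.add_assoc]
    calc x (n₀ + k * q + m) = x (n₀ + (k + j) * q + r) := by rw [e1]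
      _ = x (n₀ + r) := hper (k + j) r hr
      _ = x (n₀ + j * q + r) := (hper j r hr).symm
      _ = x (n₀ + m) := by rw [e2]
  have hshift_eq : ∀ k : ℕ, IEMWandering.shiftS^[n₀ + k * q] x = IEMWandering.shiftS^[n₀] x := by
    intro k; funext m
    rw [PNE.shiftS_iter_apply, PNE.shiftS_iter_apply]
    exact hperiod k m
  -- the periodic letter and extreme point
  have hbase : ∀ k : ℕ, PNE.baseL a x (n₀ + (k+1) * q) = (x (n₀ + (q - 1))).2.1 := by
    intro k
    have h2 : (k+1) * q = k * q + q := by ring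
    have e : n₀ + (k+1) * q = (n₀ + k * q + (q - 1)) + 1 := by omega
    rw [e]
    show (x (n₀ + k * q + (q - 1))).2.1 = _
    rw [hperiod k (q - 1)]
  have hext : ∀ k : ℕ, IEMWandering.zrep β γ (IEMWandering.shiftS^[n₀] x)
      ∈ IEMWandering.ExtPts σ β γ ((x (n₀ + (q - 1))).2.1)
        (τ * ((IEMWandering.unitDir β)⁻¹) ^ (n₀ + (k+1) * q)) := by
    intro k
    have h := (PNE.ext_iter hβ hτ hx hmem (n₀ + (k+1) * q)).2
    rw [hbase k] at h
    rwa [hshift_eq (k+1)] at h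
  set c' : A := (x (n₀ + (q - 1))).2.1
  set w' : ℂ := IEMWandering.zrep β γ (IEMWandering.shiftS^[n₀] x) with hw'def
  have hfrac_c : w' ∈ IEMWandering.Frac σ β γ c' := (hext 0).1
  -- η = δ^q is not a root of unity and has modulus 1
  set η : ℂ := ((IEMWandering.unitDir β)⁻¹) ^ q with hηdef
  have hη1 : Complex.abs η = 1 := by rw [hηdef, map_pow, hδc1, one_pow]
  have hηnr : ∀ n : ℕ, 0 < n → η ^ n ≠ 1 := by
    intro n hn h1
    rw [hηdef, ← pow_mul, inv_pow, inv_eq_one] at h1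
    exact hβ0 (q * n) (by positivity) h1
  -- singleton property at c'
  have hsing : ∀ z ∈ IEMWandering.Frac σ β γ c', z = w' := by
    intro z hzF
    by_contra hzw
    have hu : z - w' ≠ 0 := sub_ne_zero.mpr hzw
    have hau : 0 < Complex.abs (z - w') := AbsoluteValue.pos _ hu
    set ζ0 : ℂ := -(starRingEnd ℂ (z - w')) / (Complex.abs (z - w') : ℂ) with hζ0def
    have hζ01 : Complex.abs ζ0 = 1 := by
      rw [hζ0def, map_div₀]
      have h1 : Complex.abs (-(starRingEnd ℂ (z - w'))) = Complex.abs (z - w') := by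
        rw [← map_neg (starRingEnd ℂ) (z - w'), Complex.abs_conj, neg_sub]
        rw [show w' - z = -(z - w') by ring, map_neg_eq_map]
      have h2 : Complex.abs ((Complex.abs (z - w') : ℝ) : ℂ) = Complex.abs (z - w') := by
        rw [Complex.abs_ofReal, _root_.abs_of_pos hau]
      rw [h1, h2, div_self (ne_of_gt hau)]
    set ρ : ℂ := τ * ((IEMWandering.unitDir β)⁻¹) ^ (n₀ + q) with hρdef
    have hρ1 : Complex.abs ρ = 1 := by
      rw [hρdef, map_mul, map_pow, hδc1, one_pow, hτ, mul_one]
    have hρ0 : ρ ≠ 0 := by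
      intro h; rw [h] at hρ1; simp at hρ1
    have hρη : ∀ k : ℕ, τ * ((IEMWandering.unitDir β)⁻¹) ^ (n₀ + (k+1) * q) = ρ * η ^ k := by
      intro k
      have e : n₀ + (k+1) * q = (n₀ + q) + q * k := by ring
      rw [e, pow_add, hρdef, hηdef, ← pow_mul]
      ring
    have hζρ : Complex.abs (ζ0 * ρ⁻¹) = 1 := by
      rw [map_mul, map_inv₀, hζ01, hρ1]; norm_num
    obtain ⟨k, hk1, hk⟩ := PNE.exists_nat_pow_near hη1 hηnr (ζ0 * ρ⁻¹) hζρ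
      (ε := 1/2) (by norm_num)
    have hk' : Complex.abs (ρ * η ^ k - ζ0) < 1/2 := by
      have hcanc : ρ * (ζ0 * ρ⁻¹) = ζ0 := by
        rw [mul_comm ζ0 ρ⁻¹, ← mul_assoc, mul_inv_cancel₀ hρ0, one_mul]
      have he : ρ * η ^ k - ζ0 = ρ * (η ^ k - ζ0 * ρ⁻¹) := by
        rw [mul_sub, hcanc]
      rw [he, map_mul, hρ1, one_mul]
      exact hk
    have hτk : Complex.abs (τ * ((IEMWandering.unitDir β)⁻¹) ^ (n₀ + (k+1) * q)) = 1 := by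
      rw [map_mul, map_pow, hδc1, one_pow, hτ, mul_one]
    have hineq := PNE.ext_le hβ hτk (hext k) hzF
    rw [hρη k] at hineq
    set ξ : ℂ := ρ * η ^ k with hξdef
    have h0 : 0 ≤ (ξ * (z - w')).re := by
      have : ξ * (z - w') = ξ * z - ξ * w' := by ring
      rw [this, Complex.sub_re]
      linarith
    have hζ0u : (ζ0 * (z - w')).re = -Complex.abs (z - w') := by
      have he : ζ0 * (z - w')
          = ((-(Complex.normSq (z - w')) / Complex.abs (z - w') : ℝ) : ℂ) := by
        rw [hζ0def, div_mul_eq_mul_div, neg_mul,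
          mul_comm (starRingEnd ℂ (z - w')) (z - w'), Complex.mul_conj]
        push_cast
        ring
      rw [he, Complex.ofReal_re]
      rw [← Complex.sq_abs]
      field_simp [pow_two]
    have hbound : ((ξ - ζ0) * (z - w')).re
        ≤ Complex.abs (ξ - ζ0) * Complex.abs (z - w') := by
      calc ((ξ - ζ0) * (z - w')).re ≤ Complex.abs ((ξ - ζ0) * (z - w')) :=
            Complex.re_le_abs _
        _ = Complex.abs (ξ - ζ0) * Complex.abs (z - w') := map_mul _ _ _
    have hfinal : (ξ * (z - w')).re < 0 := by
      have he : ξ * (z - w') = ζ0 * (z - w') + (ξ - ζ0) * (z - w') := by ring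
      rw [he, Complex.add_re, hζ0u]
      have hxk : Complex.abs (ξ - ζ0) < 1/2 := hk'
      nlinarith [hau, hbound]
    linarith
  -- propagate the singleton property everywhere
  have hsub_c : ∀ z ∈ IEMWandering.Frac σ β γ c', ∀ z' ∈ IEMWandering.Frac σ β γ c', z = z' := by
    intro z hz z' hz'
    rw [hsing z hz, hsing z' hz']
  have hne : ∀ c : A, σ c ≠ [] := PNE.sigma_ne_nil hprim hx
  obtain ⟨n, hn⟩ := hprim
  have hall : ∀ b : A, ∀ z ∈ IEMWandering.Frac σ β γ b, ∀ z' ∈ IEMWandering.Frac σ β γ b, z = z' :=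
    fun b => PNE.iter_singleton hβ n c' hsub_c b (hn b c')
  set wv : A → ℂ := fun b => IEMWandering.zrep β γ (PNE.xcan σ hne b) with hwvdef
  have hwvF : ∀ b : A, wv b ∈ IEMWandering.Frac σ β γ b :=
    fun b => ⟨_, PNE.xcan_InS σ hne b, rfl⟩
  have hrel : ∀ (c : A) (p : List A) (b : A) (s : List A), σ c = p ++ b :: s →
      β * wv c = IEMWandering.wordSum γ p + wv b := by
    intro c p b s hdec
    have hd : σ c = (p, b, s).1 ++ (p, b, s).2.1 :: (p, b, s).2.2 := hdec
    have h1 : IEMWandering.zrep β γ (PNE.consT (p, b, s) (PNE.xcan σ hne b))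
        ∈ IEMWandering.Frac σ β γ c := ⟨_, PNE.cons_InS hd (PNE.xcan_InS σ hne b), rfl⟩
    have heq := hall c _ h1 _ (hwvF c)
    rw [PNE.zrep_cons hβ hd (PNE.xcan_InS σ hne b)] at heq
    rw [← heq]
    field_simp
    rfl
  -- all canonical values vanish
  have hRnn : 0 ≤ PNE.Rc σ β γ := le_trans (AbsoluteValue.nonneg _ _)
    (PNE.zrep_abs_le hβ (PNE.xcan_InS σ hne a))
  have hwv0 : ∀ c : A, wv c = 0 := by
    have hhead : ∀ c : A, wv ((σ c).head (hne c)) = β * wv c := by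
      intro c
      have hdec : σ c = [] ++ (σ c).head (hne c) :: (σ c).tail := by
        simp [List.cons_head_tail]
      have h := hrel c [] ((σ c).head (hne c)) ((σ c).tail) hdec
      have hws : IEMWandering.wordSum γ ([] : List A) = 0 := by simp [IEMWandering.wordSum]
      rw [hws, zero_add] at h
      exact h.symm
    set g : A → A := fun c => (σ c).head (hne c) with hgdef
    have hiter : ∀ (k : ℕ) (c : A), wv (g^[k] c) = β ^ k * wv c := by
      intro k
      induction k with
      | zero => intro c; simp
      | succ k ih =>
          intro c
          rw [Function.iterate_succ_apply', hgdef]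
          show wv ((σ (g^[k] c)).head (hne _)) = β ^ (k+1) * wv c
          rw [hhead (g^[k] c), ih c, pow_succ]
          ring
    intro c
    by_contra h0
    have hac : 0 < Complex.abs (wv c) := AbsoluteValue.pos _ h0
    obtain ⟨k, hk⟩ := pow_unbounded_of_one_lt (PNE.Rc σ β γ / Complex.abs (wv c)) hβ
    have hb : Complex.abs (wv (g^[k] c)) ≤ PNE.Rc σ β γ :=
      PNE.zrep_abs_le hβ (PNE.xcan_InS σ hne (g^[k] c))
    rw [hiter k c, map_mul, map_pow] at hb
    rw [div_lt_iff₀ hac] at hk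
    linarith
  -- the word sums of the initial segments vanish
  have hwlast : ∀ c : A, IEMWandering.wordSum γ ((σ c).dropLast) = 0 := by
    intro c
    have hdec : σ c = (σ c).dropLast ++ (σ c).getLast (hne c) :: [] :=
      (List.dropLast_append_getLast (hne c)).symm
    have h := hrel c _ _ _ hdec
    rw [hwv0, hwv0] at h
    simpa using h.symm
  -- the eigenvector equation
  have heig : ∀ c : A, IEMWandering.wordSum γ (σ c) = β * γ c := by
    intro c
    have h := congrFun hγ.2 c
    have h1 : (IEMWandering.substMatrix σ).mulVec γ c
        = ∑ b : A, ((σ c).count b : ℂ) * γ b := by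
      simp [Matrix.mulVec, dotProduct, IEMWandering.substMatrix]
    rw [h1, PNE.count_sum] at h
    simpa using h
  have hγlast : ∀ c : A, γ ((σ c).getLast (hne c)) = β * γ c := by
    intro c
    have h1 : IEMWandering.wordSum γ (σ c)
        = IEMWandering.wordSum γ ((σ c).dropLast) + γ ((σ c).getLast (hne c)) := by
      conv_lhs => rw [← List.dropLast_append_getLast (hne c)]
      rw [IEMWandering.wordSum, List.map_append, List.sum_append]
      simp [IEMWandering.wordSum]
    rw [hwlast, zero_add] at h1
    rw [← h1, heig]
  -- conclude γ = 0, a contradiction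
  set l : A → A := fun c => (σ c).getLast (hne c) with hldef
  have hliter : ∀ (k : ℕ) (c : A), γ (l^[k] c) = β ^ k * γ c := by
    intro k
    induction k with
    | zero => intro c; simp
    | succ k ih =>
        intro c
        rw [Function.iterate_succ_apply', hldef]
        show γ ((σ (l^[k] c)).getLast (hne _)) = β ^ (k+1) * γ c
        rw [hγlast (l^[k] c), ih c, pow_succ]
        ring
  have hγB : ∀ b : A, Complex.abs (γ b) ≤ ∑ b' : A, Complex.abs (γ b') :=
    fun b => Finset.single_le_sum (f := fun b' => Complex.abs (γ b'))
      (fun i _ => AbsoluteValue.nonneg _ _) (Finset.mem_univ b)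
  have hγ0 : ∀ c : A, γ c = 0 := by
    intro c
    by_contra h0
    have hac : 0 < Complex.abs (γ c) := AbsoluteValue.pos _ h0
    obtain ⟨k, hk⟩ := pow_unbounded_of_one_lt
      ((∑ b' : A, Complex.abs (γ b')) / Complex.abs (γ c)) hβ
    have hb : Complex.abs (γ (l^[k] c)) ≤ ∑ b' : A, Complex.abs (γ b') := hγB _
    rw [hliter k c, map_mul, map_pow] at hb
    rw [div_lt_iff₀ hac] at hk
    linarith
  exact hγ.1 (funext hγ0)
end
end

section
/- Let a ∈ 𝒜 and τ ∈ S¹. Then lim_{t→0⁺} (v_a(τ e^{it}) − v_a(τ))/t = −Im(τ e_a^+(τ)) and lim_{t→0⁻} (v_a(τ e^{it}) − v_a(τ))/t = −Im(τ e_a^−(τ)), where e_a^+(τ) and e_a^−(τ) are the points of E_a(τ) at which z ↦ Im(τ z) is maximal and minimal, respectively. -/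
open Complex MeasureTheory Filter Set
open scoped BigOperators

noncomputable section

section AuxLemmas

set_option linter.unreachableTactic false
set_option linter.unusedTactic false

private lemma core_deriv (K : Set ℂ) (hK : IsCompact K)
    (g h : ℂ → ℝ) (hg : Continuous g) (hh : Continuous h)
    (e : ℂ) (he : e ∈ K)
    (hinf : ∀ z ∈ K, g e ≤ g z)
    (hmax : ∀ z ∈ K, g z = g e → h z ≤ h e) :
    Filter.Tendsto (fun t : ℝ =>
      (sInf ((fun z => Real.cos t * g z - Real.sin t * h z) '' K) - g e) / t)
      (nhdsWithin 0 (Set.Ioi 0)) (nhds (-(h e))) := by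
  have hne : K.Nonempty := ⟨e, he⟩
  have hbdd : ∀ t : ℝ, BddBelow ((fun z => Real.cos t * g z - Real.sin t * h z) '' K) :=
    fun t => (hK.image ((continuous_const.mul hg).sub (continuous_const.mul hh))).bddBelow
  have hupper : ∀ t : ℝ, sInf ((fun z => Real.cos t * g z - Real.sin t * h z) '' K)
      ≤ Real.cos t * g e - Real.sin t * h e :=
    fun t => csInf_le (hbdd t) ⟨e, he, rfl⟩
  obtain ⟨M, hM⟩ := hK.exists_bound_of_continuousOn hh.continuousOn
  have hM0 : 0 ≤ M := le_trans (norm_nonneg _) (hM e he)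
  -- slope limits
  have hcoss : Tendsto (fun t : ℝ => (Real.cos t - 1) / t)
      (nhdsWithin 0 (Set.Ioi 0)) (nhds 0) := by
    have h1 := hasDerivAt_iff_tendsto_slope.mp (Real.hasDerivAt_cos 0)
    have h2 := h1.mono_left
      (nhdsWithin_mono 0 (fun x (hx : x ∈ Set.Ioi (0:ℝ)) => ne_of_gt hx))
    have h3 : Tendsto (fun t : ℝ => (Real.cos t - 1) / t)
        (nhdsWithin 0 (Set.Ioi 0)) (nhds (-Real.sin 0)) :=
      h2.congr (fun t => by simp [slope_def_field])
    simpa using h3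
  have hsins : Tendsto (fun t : ℝ => Real.sin t / t)
      (nhdsWithin 0 (Set.Ioi 0)) (nhds 1) := by
    have h1 := hasDerivAt_iff_tendsto_slope.mp (Real.hasDerivAt_sin 0)
    have h2 := h1.mono_left
      (nhdsWithin_mono 0 (fun x (hx : x ∈ Set.Ioi (0:ℝ)) => ne_of_gt hx))
    have h3 : Tendsto (fun t : ℝ => Real.sin t / t)
        (nhdsWithin 0 (Set.Ioi 0)) (nhds (Real.cos 0)) :=
      h2.congr (fun t => by simp [slope_def_field])
    simpa using h3
  have hLlim : ∀ c : ℝ, Tendsto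
      (fun t : ℝ => g e * ((Real.cos t - 1) / t) - c * (Real.sin t / t))
      (nhdsWithin 0 (Set.Ioi 0)) (nhds (-c)) := by
    intro c
    have := (hcoss.const_mul (g e)).sub (hsins.const_mul c)
    simpa using this
  have halg : ∀ t : ℝ, t ≠ 0 → ∀ c : ℝ,
      (Real.cos t * g e - Real.sin t * c - g e) / t
        = g e * ((Real.cos t - 1) / t) - c * (Real.sin t / t) := by
    intro t ht c; field_simp; ring
  have hcos1 : Tendsto Real.cos (nhdsWithin 0 (Set.Ioi 0)) (nhds 1) := by
    have := (Real.continuous_cos.tendsto 0).mono_left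
      (nhdsWithin_le_nhds (s := Set.Ioi (0:ℝ)))
    simpa using this
  have hsin0 : Tendsto Real.sin (nhdsWithin 0 (Set.Ioi 0)) (nhds 0) := by
    have := (Real.continuous_sin.tendsto 0).mono_left
      (nhdsWithin_le_nhds (s := Set.Ioi (0:ℝ)))
    simpa using this
  rw [tendsto_order]
  constructor
  · -- lower bound
    intro b hb
    set ε : ℝ := (-(h e) - b) / 2 with hεdef
    have hεpos : 0 < ε := by simp only [hεdef]; linarith
    obtain ⟨δ, hδpos, hδ⟩ : ∃ δ > 0, ∀ z ∈ K, g z ≤ g e + δ → h z ≤ h e + ε := by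
      by_contra hcon
      push_neg at hcon
      have hZc : IsCompact {z | z ∈ K ∧ h e + ε ≤ h z} :=
        hK.inter_right (isClosed_le continuous_const hh)
      have hZne : {z | z ∈ K ∧ h e + ε ≤ h z}.Nonempty := by
        obtain ⟨z, hzK, _, hz2⟩ := hcon 1 one_pos
        exact ⟨z, hzK, hz2.le⟩
      obtain ⟨z₀, hz₀Z, hz₀min⟩ := hZc.exists_isMinOn hZne hg.continuousOn
      have hz₀le : g z₀ ≤ g e := by
        refine le_of_forall_pos_le_add ?_
        intro δ hδ
        obtain ⟨z, hzK, hz1, hz2⟩ := hcon δ hδ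
        exact (isMinOn_iff.mp hz₀min z ⟨hzK, hz2.le⟩).trans hz1
      have heq : g z₀ = g e := le_antisymm hz₀le (hinf z₀ hz₀Z.1)
      have := hmax z₀ hz₀Z.1 heq
      have := hz₀Z.2
      linarith
    set A : ℝ := M + |h e| + ε + 1 with hAdef
    have hApos : 0 < A := by
      have := abs_nonneg (h e); simp only [hAdef]; linarith
    have hAbnd : ∀ z ∈ K, h z - h e - ε ≤ A := by
      intro z hz
      have h1 : h z ≤ M := le_trans (le_abs_self _) (hM z hz)
      have h2 : -(h e) ≤ |h e| := neg_le_abs _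
      simp only [hAdef]; linarith
    have Ev1 : ∀ᶠ t in nhdsWithin 0 (Set.Ioi 0), t ∈ Set.Ioo (0:ℝ) 1 :=
      Ioo_mem_nhdsGT_of_mem ⟨le_refl 0, one_pos⟩
    have Ev2 : ∀ᶠ t in nhdsWithin 0 (Set.Ioi 0), (1:ℝ)/2 < Real.cos t :=
      (tendsto_order.1 hcos1).1 _ (by norm_num)
    have Ev3 : ∀ᶠ t in nhdsWithin 0 (Set.Ioi 0), Real.sin t < δ / (2 * A) :=
      (tendsto_order.1 hsin0).2 _ (by positivity)
    have Ev4 : ∀ᶠ t in nhdsWithin 0 (Set.Ioi 0),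
        b < g e * ((Real.cos t - 1) / t) - (h e + ε) * (Real.sin t / t) :=
      (tendsto_order.1 (hLlim (h e + ε))).1 b (by linarith)
    filter_upwards [Ev1, Ev2, Ev3, Ev4] with t ht1 ht2 ht3 ht4
    have htpos : 0 < t := ht1.1
    have hsinnn : 0 ≤ Real.sin t := by
      apply Real.sin_nonneg_of_nonneg_of_le_pi ht1.1.le
      have := Real.pi_gt_three; linarith [ht1.2]
    have hcosnn : 0 ≤ Real.cos t := by linarith
    -- the key lower bound on the infimum
    have vlow : Real.cos t * g e - Real.sin t * (h e + ε)
        ≤ sInf ((fun z => Real.cos t * g z - Real.sin t * h z) '' K) := by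
      apply le_csInf (hne.image _)
      rintro y ⟨z, hzK, rfl⟩
      rcases le_or_gt (g z) (g e + δ) with hzA | hzB
      · have h1 : Real.cos t * g e ≤ Real.cos t * g z :=
          mul_le_mul_of_nonneg_left (hinf z hzK) hcosnn
        have h2 : Real.sin t * h z ≤ Real.sin t * (h e + ε) :=
          mul_le_mul_of_nonneg_left (hδ z hzK hzA) hsinnn
        simp only []
        linarith
      · have e1 : Real.sin t * (h z - h e - ε) ≤ Real.sin t * A :=
          mul_le_mul_of_nonneg_left (hAbnd z hzK) hsinnn
        have e2 : Real.sin t * A ≤ (δ / (2 * A)) * A :=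
          mul_le_mul_of_nonneg_right ht3.le hApos.le
        have e3 : (δ / (2 * A)) * A = δ / 2 := by field_simp
        have e4 : δ / 2 ≤ Real.cos t * (g z - g e) := by
          have := mul_le_mul ht2.le (show δ ≤ g z - g e by linarith) hδpos.le
            (by linarith : (0:ℝ) ≤ Real.cos t)
          linarith
        simp only []
        nlinarith
    have hineq : g e * ((Real.cos t - 1) / t) - (h e + ε) * (Real.sin t / t)
        ≤ (sInf ((fun z => Real.cos t * g z - Real.sin t * h z) '' K) - g e) / t := by
      rw [← halg t htpos.ne' (h e + ε)]
      gcongr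
      all_goals linarith
    linarith
  · -- upper bound
    intro b hb
    have Ev4 : ∀ᶠ t in nhdsWithin 0 (Set.Ioi 0),
        g e * ((Real.cos t - 1) / t) - h e * (Real.sin t / t) < b :=
      (tendsto_order.1 (hLlim (h e))).2 b hb
    filter_upwards [self_mem_nhdsWithin, Ev4] with t ht1 ht4
    have htpos : 0 < t := ht1
    have : (sInf ((fun z => Real.cos t * g z - Real.sin t * h z) '' K) - g e) / t
        ≤ (Real.cos t * g e - Real.sin t * h e - g e) / t := by
      gcongr
      all_goals linarith [hupper t]
    rw [halg t htpos.ne' (h e)] at this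
    linarith

lemma IEMWandering.frac_isCompact {A : Type} [Fintype A] [DecidableEq A]
    (σ : A → List A) (β : ℂ) (γ : A → ℂ) (hβ : 1 < ‖β‖) (a : A) :
    IsCompact (Frac σ β γ a) := by
  classical
  letI : Inhabited A := ⟨a⟩
  letI : TopologicalSpace (Triple A) := ⊥
  haveI : DiscreteTopology (Triple A) := ⟨rfl⟩
  set S : Set (ℕ → Triple A) := {x | InS σ a x} with hSdef
  set W : Set (List A) := insert (σ a) (Set.range σ) with hWdef
  have hWfin : W.Finite := (Set.finite_range σ).insert (σ a)
  set D : Set (Triple A) := {d | d.1 ++ d.2.1 :: d.2.2 ∈ W} with hDdef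
  have hDfin : D.Finite := by
    apply Set.Finite.subset (hWfin.biUnion (fun w _ =>
      (Set.finite_Iio (w.length + 1)).image
        (fun n => ((w.take n, (w.drop n).headI, (w.drop n).tail) : Triple A))))
    rintro ⟨p, c, s⟩ hd
    simp only [Set.mem_iUnion]
    refine ⟨p ++ c :: s, hd, p.length, ?_, ?_⟩
    · simp only [Set.mem_Iio, List.length_append, List.length_cons]; omega
    · simp [List.take_left, List.drop_left]
  have hsub : S ⊆ {x | ∀ m, x m ∈ D} := by
    intro x hx m
    cases m with
    | zero => exact Set.mem_insert_iff.mpr (Or.inl hx.1.symm)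
    | succ m => exact Set.mem_insert_iff.mpr (Or.inr ⟨(x m).2.1, hx.2 m⟩)
  have hPi : IsCompact {x : ℕ → Triple A | ∀ m, x m ∈ D} :=
    isCompact_pi_infinite (fun _ => hDfin.isCompact)
  have hScl : IsClosed S := by
    have : S = ((fun x : ℕ → Triple A => x 0) ⁻¹'
          {d : Triple A | σ a = d.1 ++ d.2.1 :: d.2.2}) ∩
        ⋂ m : ℕ, (fun x : ℕ → Triple A => (x m, x (m+1))) ⁻¹'
          {d : Triple A × Triple A | σ d.1.2.1 = d.2.1 ++ d.2.2.1 :: d.2.2.2} := by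
      ext x
      simp only [hSdef, Set.mem_setOf_eq, Set.mem_inter_iff, Set.mem_preimage,
        Set.mem_iInter, InS]
    rw [this]
    exact IsClosed.inter (IsClosed.preimage (continuous_apply 0) (isClosed_discrete _))
      (isClosed_iInter (fun m => IsClosed.preimage
        ((continuous_apply m).prodMk (continuous_apply (m+1))) (isClosed_discrete _)))
  have hSc : IsCompact S := hPi.of_isClosed_subset hScl hsub
  -- bound on the word sums
  set wa : List A → ℝ := fun w => (w.map (fun c => ‖γ c‖)).sum with hwadef
  have hwann : ∀ w, 0 ≤ wa w := by
    intro w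
    apply List.sum_nonneg
    intro r hr
    simp only [List.mem_map] at hr
    obtain ⟨c, _, rfl⟩ := hr
    exact norm_nonneg _
  set C : ℝ := wa (σ a) + ∑ b : A, wa (σ b) with hCdef
  have hpre : ∀ (w p : List A) (c : A) (s : List A), w = p ++ c :: s →
      ‖wordSum γ p‖ ≤ wa w := by
    intro w p c s hw
    have h1 : ‖wordSum γ p‖ ≤ wa p := by
      clear hw
      induction p with
      | nil => simp [wordSum, hwadef]
      | cons c l ih =>
        simp only [wordSum, hwadef, List.map_cons, List.sum_cons] at *
        exact le_trans (norm_add_le _ _) (by linarith)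
    have h2 : wa w = wa p + wa (c :: s) := by
      simp [hwadef, hw]
    linarith [hwann (c :: s)]
  have hbound : ∀ x ∈ S, ∀ m : ℕ, ‖wordSum γ (x m).1‖ ≤ C := by
    intro x hx m
    have hsums : 0 ≤ ∑ b : A, wa (σ b) := Finset.sum_nonneg (fun b _ => hwann _)
    cases m with
    | zero =>
      have := hpre (σ a) (x 0).1 (x 0).2.1 (x 0).2.2 hx.1
      rw [hCdef]; linarith
    | succ m =>
      have h1 := hpre (σ ((x m).2.1)) (x (m+1)).1 (x (m+1)).2.1 (x (m+1)).2.2 (hx.2 m)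
      have h2 : wa (σ ((x m).2.1)) ≤ ∑ b : A, wa (σ b) :=
        Finset.single_le_sum (fun b _ => hwann (σ b)) (Finset.mem_univ _)
      rw [hCdef]; linarith [hwann (σ a)]
  have hC0 : 0 ≤ C := by
    rw [hCdef]
    have := hwann (σ a)
    have : 0 ≤ ∑ b : A, wa (σ b) := Finset.sum_nonneg (fun b _ => hwann _)
    linarith [hwann (σ a)]
  set q : ℝ := ‖β‖⁻¹ with hqdef
  have hq0 : 0 ≤ q := by positivity
  have hq1 : q < 1 := by
    rw [hqdef]
    exact inv_lt_one_of_one_lt₀ hβ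
  have hu : Summable (fun m : ℕ => q ^ (m + 1) * C) := by
    apply Summable.mul_right
    exact (summable_geometric_of_lt_one hq0 hq1).comp_injective (add_left_injective 1)
  have huf : ∀ (m : ℕ) (x : ℕ → Triple A), x ∈ S →
      ‖β⁻¹ ^ (m + 1) * wordSum γ (x m).1‖ ≤ q ^ (m + 1) * C := by
    intro m x hx
    rw [norm_mul, norm_pow, norm_inv]
    exact mul_le_mul_of_nonneg_left (hbound x hx m) (by positivity)
  have htu : TendstoUniformlyOn
      (fun n (x : ℕ → Triple A) => ∑ m ∈ Finset.range n, β⁻¹ ^ (m + 1) * wordSum γ (x m).1)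
      (fun x => ∑' m : ℕ, β⁻¹ ^ (m + 1) * wordSum γ (x m).1) atTop S :=
    tendstoUniformlyOn_tsum_nat hu huf
  have hcont : ContinuousOn (zrep β γ) S := by
    apply htu.continuousOn
    apply Filter.Eventually.frequently
    filter_upwards with n
    apply Continuous.continuousOn
    apply continuous_finset_sum
    intro m _
    show Continuous ((fun d : Triple A => β⁻¹ ^ (m + 1) * wordSum γ d.1) ∘
      (fun x : ℕ → Triple A => x m))
    exact continuous_of_discreteTopology.comp (continuous_apply m)
  have himg : Frac σ β γ a = zrep β γ '' S := by
    ext z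
    simp only [Frac, Set.mem_setOf_eq, Set.mem_image, hSdef]
  exact himg ▸ hSc.image_of_continuousOn hcont

end AuxLemmas

/-- **Lemma 6.4** (one-sided derivatives of `v_a`). For `a ∈ 𝒜` and `τ ∈ S¹`,
`lim_{t→0⁺} (v_a(τe^{it}) − v_a(τ))/t = −Im(τ e_a⁺(τ))` and
`lim_{t→0⁻} (v_a(τe^{it}) − v_a(τ))/t = −Im(τ e_a⁻(τ))`, where `e_a⁺(τ)`, `e_a⁻(τ)`
are the points of `E_a(τ)` where `z ↦ Im(τz)` is maximal resp. minimal. -/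
theorem vDir_one_sided_derivatives {A : Type} [Fintype A] [DecidableEq A]
    (σ : A → List A) (hprim : IEMWandering.Primitive σ)
    (β : ℂ) (γ : A → ℂ) (hβ : 1 < ‖β‖)
    (hγ : IEMWandering.IsEigenvector σ β γ)
    (a : A) (τ : ℂ) (hτ : ‖τ‖ = 1)
    (ep em : ℂ)
    (hep : ep ∈ IEMWandering.ExtPts σ β γ a τ)
    (hem : em ∈ IEMWandering.ExtPts σ β γ a τ)
    (hepMax : ∀ z ∈ IEMWandering.ExtPts σ β γ a τ, (τ * z).im ≤ (τ * ep).im)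
    (hemMin : ∀ z ∈ IEMWandering.ExtPts σ β γ a τ, (τ * em).im ≤ (τ * z).im) :
    Filter.Tendsto (fun t : ℝ =>
        (IEMWandering.vDir σ β γ a (τ * Complex.exp ((t : ℂ) * Complex.I)) -
          IEMWandering.vDir σ β γ a τ) / t)
      (nhdsWithin 0 (Set.Ioi 0)) (nhds (-(τ * ep).im)) ∧
    Filter.Tendsto (fun t : ℝ =>
        (IEMWandering.vDir σ β γ a (τ * Complex.exp ((t : ℂ) * Complex.I)) -
          IEMWandering.vDir σ β γ a τ) / t)
      (nhdsWithin 0 (Set.Iio 0)) (nhds (-(τ * em).im)) := by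
  classical
  have hK : IsCompact (IEMWandering.Frac σ β γ a) := IEMWandering.frac_isCompact σ β γ hβ a
  have hgc : Continuous fun z : ℂ => (τ * z).re :=
    Complex.continuous_re.comp (continuous_const.mul continuous_id)
  have hhc : Continuous fun z : ℂ => (τ * z).im :=
    Complex.continuous_im.comp (continuous_const.mul continuous_id)
  have hbdd : BddBelow ((fun z => (τ * z).re) '' IEMWandering.Frac σ β γ a) :=
    (hK.image hgc).bddBelow
  have hvlb : ∀ z ∈ IEMWandering.Frac σ β γ a,
      IEMWandering.vDir σ β γ a τ ≤ (τ * z).re :=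
    fun z hz => csInf_le hbdd ⟨z, hz, rfl⟩
  have hre : ∀ t : ℝ, ∀ z : ℂ,
      Real.cos t * (τ * z).re - Real.sin t * (τ * z).im
        = ((τ * Complex.exp ((t : ℂ) * Complex.I)) * z).re := by
    intro t z
    have hmz : (τ * Complex.exp ((t : ℂ) * Complex.I)) * z
        = Complex.exp ((t : ℂ) * Complex.I) * (τ * z) := by ring
    have h2 : (Complex.exp ((t : ℂ) * Complex.I) * (τ * z)).re
        = Real.cos t * (τ * z).re - Real.sin t * (τ * z).im := by
      rw [Complex.mul_re, Complex.exp_ofReal_mul_I_re, Complex.exp_ofReal_mul_I_im]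
    rw [hmz, h2]
  have hvt : ∀ t : ℝ, IEMWandering.vDir σ β γ a (τ * Complex.exp ((t : ℂ) * Complex.I))
      = sInf ((fun z => Real.cos t * (τ * z).re - Real.sin t * (τ * z).im) ''
          IEMWandering.Frac σ β γ a) := by
    intro t
    have : (fun z : ℂ => Real.cos t * (τ * z).re - Real.sin t * (τ * z).im)
        = fun z : ℂ => ((τ * Complex.exp ((t : ℂ) * Complex.I)) * z).re :=
      funext fun z => hre t z
    rw [this]
    rfl
  constructor
  · have Hp := core_deriv (IEMWandering.Frac σ β γ a) hK
      (fun z => (τ * z).re) (fun z => (τ * z).im) hgc hhc ep hep.1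
      (fun z hz => hep.2.le.trans (hvlb z hz))
      (fun z hz hze => hepMax z ⟨hz, hze.trans hep.2⟩)
    refine Hp.congr fun t => ?_
    rw [hvt t, ← hep.2]
  · have Hm := core_deriv (IEMWandering.Frac σ β γ a) hK
      (fun z => (τ * z).re) (fun z => -(τ * z).im) hgc hhc.neg em hem.1
      (fun z hz => hem.2.le.trans (hvlb z hz))
      (fun z hz hze => neg_le_neg (hemMin z ⟨hz, hze.trans hem.2⟩))
    have hvt' : ∀ s : ℝ,
        IEMWandering.vDir σ β γ a (τ * Complex.exp (((-s : ℝ) : ℂ) * Complex.I))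
          = sInf ((fun z => Real.cos s * (τ * z).re - Real.sin s * (-(τ * z).im)) ''
              IEMWandering.Frac σ β γ a) := by
      intro s
      have hfg : (fun z : ℂ => Real.cos (-s) * (τ * z).re - Real.sin (-s) * (τ * z).im)
          = fun z : ℂ => Real.cos s * (τ * z).re - Real.sin s * (-(τ * z).im) := by
        funext z
        rw [Real.cos_neg, Real.sin_neg]
        ring
      rw [hvt (-s), hfg]
    have hFm : Filter.Tendsto (fun s : ℝ =>
        (IEMWandering.vDir σ β γ a (τ * Complex.exp (((-s : ℝ) : ℂ) * Complex.I)) -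
          IEMWandering.vDir σ β γ a τ) / (-s))
        (nhdsWithin 0 (Set.Ioi 0)) (nhds (-(τ * em).im)) := by
      have h1 : Filter.Tendsto (fun s : ℝ =>
          -((sInf ((fun z => Real.cos s * (τ * z).re - Real.sin s * (-(τ * z).im)) ''
              IEMWandering.Frac σ β γ a) - (τ * em).re) / s))
          (nhdsWithin 0 (Set.Ioi 0)) (nhds (-(τ * em).im)) := by
        have := Hm.neg
        simpa using this
      refine h1.congr fun s => ?_
      rw [hvt' s, ← hem.2, div_neg]
    have hneg : Filter.Tendsto (fun t : ℝ => -t)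
        (nhdsWithin 0 (Set.Iio 0)) (nhdsWithin 0 (Set.Ioi 0)) := by
      rw [tendsto_nhdsWithin_iff]
      constructor
      · have := (continuous_neg.tendsto (0 : ℝ)).mono_left
          (nhdsWithin_le_nhds (s := Set.Iio (0:ℝ)))
        simpa using this
      · filter_upwards [self_mem_nhdsWithin] with t ht
        simp only [Set.mem_Iio] at ht
        exact Set.mem_Ioi.mpr (neg_pos.mpr ht)
    refine (hFm.comp hneg).congr fun t => ?_
    simp [Function.comp]
end
end

section
/- Let a ∈ 𝒜 and τ ∈ Ψ_a. Assume (p,c,s) and (p̄,c̄,s̄) are decompositions of σ(a) such that E_{a,(p,c,s)}(τ) and E_{a,(p̄,c̄,s̄)}(τ) are nonempty and E_{a,(p,c,s)}(τ) ∩ E_{a,(p̄,c̄,s̄)}(τ) = ∅. Put D = min{ |z − z'| : z ∈ E_{a,(p,c,s)}(τ), z' ∈ E_{a,(p̄,c̄,s̄)}(τ) }. Then D > 0, and for every sequence (τ_k)_{k≥1} in S¹ with τ_k → τ, liminf_{k→∞} |v_{a,(p,c,s)}(τ_k) − v_{a,(p̄,c̄,s̄)}(τ_k)| / ⟦τ −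 τ_k⟧ ≥ D. -/
open Complex MeasureTheory Filter Set
open scoped BigOperators

noncomputable section

namespace CLAux

open IEMWandering

/-! ### Real combinatorial lemmas -/

lemma lemC {I I' : Set ℝ} {D s ε t₁ t₁' Δ : ℝ}
    (hsep : ∀ t ∈ I, ∀ t' ∈ I', D ≤ |t - t'|) (hD : 0 < D)
    (hs : 0 ≤ s) (hε : 0 ≤ ε)
    (ht₁ : ∃ t₀ ∈ I, |t₁ - t₀| ≤ ε) (ht₁' : ∃ t₀' ∈ I', |t₁' - t₀'| ≤ ε)
    (h1 : ∀ t' ∈ I', s * (t' - t₁) ≤ Δ)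
    (h2 : ∀ t ∈ I, s * (t - t₁') ≤ -Δ) :
    s * (D - ε) ≤ |Δ| := by
  obtain ⟨t₀, ht₀I, ht₀⟩ := ht₁
  obtain ⟨t₀', ht₀'I, ht₀'⟩ := ht₁'
  by_cases hc : ∃ t' ∈ I', t₀ + D ≤ t'
  · obtain ⟨t', ht'I, ht'⟩ := hc
    have hle : s * (D - ε) ≤ s * (t' - t₁) := by
      apply mul_le_mul_of_nonneg_left _ hs
      have := abs_le.1 ht₀
      linarith [this.1, this.2]
    exact hle.trans ((h1 t' ht'I).trans (le_abs_self Δ))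
  · push_neg at hc
    have hall : ∀ t' ∈ I', t' ≤ t₀ - D := by
      intro t' ht'
      rcases le_abs.mp (hsep t₀ ht₀I t' ht') with h3 | h3
      · linarith
      · linarith [hc t' ht']
    by_cases hc2 : ∃ t ∈ I, t₀' + D ≤ t
    · obtain ⟨t, htI, ht⟩ := hc2
      have hle : s * (D - ε) ≤ s * (t - t₁') := by
        apply mul_le_mul_of_nonneg_left _ hs
        have := abs_le.1 ht₀'
        linarith [this.1, this.2]
      exact hle.trans ((h2 t htI).trans (neg_le_abs Δ))
    · push_neg at hc2
      exfalso
      have h1' := hall t₀' ht₀'I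
      have h2'' := hc2 t₀ ht₀I
      rcases le_abs.mp (hsep t₀ ht₀I t₀' ht₀'I) with h3 | h3 <;> linarith

lemma lemC' {I I' : Set ℝ} {D s ε t₁ t₁' Δ : ℝ}
    (hsep : ∀ t ∈ I, ∀ t' ∈ I', D ≤ |t - t'|) (hD : 0 < D) (hε : 0 ≤ ε)
    (ht₁ : ∃ t₀ ∈ I, |t₁ - t₀| ≤ ε) (ht₁' : ∃ t₀' ∈ I', |t₁' - t₀'| ≤ ε)
    (h1 : ∀ t' ∈ I', s * (t' - t₁) ≤ Δ)
    (h2 : ∀ t ∈ I, s * (t - t₁') ≤ -Δ) :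
    |s| * (D - ε) ≤ |Δ| := by
  rcases le_or_gt 0 s with hs | hs
  · rw [_root_.abs_of_nonneg hs]; exact lemC hsep hD hs hε ht₁ ht₁' h1 h2
  · rw [_root_.abs_of_neg hs]
    obtain ⟨t₀, ht₀I, ht₀⟩ := ht₁
    obtain ⟨t₀', ht₀'I, ht₀'⟩ := ht₁'
    refine lemC (I := (fun t => -t) '' I) (I' := (fun t => -t) '' I')
      (s := -s) (t₁ := -t₁) (t₁' := -t₁') (Δ := Δ) ?_ hD (by linarith) hε
      ⟨-t₀, Set.mem_image_of_mem _ ht₀I, by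
        rw [show -t₁ - -t₀ = -(t₁ - t₀) by ring, abs_neg]; exact ht₀⟩
      ⟨-t₀', Set.mem_image_of_mem _ ht₀'I, by
        rw [show -t₁' - -t₀' = -(t₁' - t₀') by ring, abs_neg]; exact ht₀'⟩
      ?_ ?_
    · rintro _ ⟨t, htI, rfl⟩ _ ⟨t', ht'I, rfl⟩
      rw [show -t - -t' = -(t - t') by ring, abs_neg]
      exact hsep t htI t' ht'I
    · rintro _ ⟨t', ht'I, rfl⟩
      rw [show -s * (-t' - -t₁) = s * (t' - t₁) by ring]
      exact h1 t' ht'I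
    · rintro _ ⟨t, htI, rfl⟩
      rw [show -s * (-t - -t₁') = s * (t - t₁') by ring]
      exact h2 t htI

/-! ### Approximation of near-minimizers by exact minimizers -/

lemma approx_ext {K : Set ℂ} (hK : IsCompact K) {f : ℂ → ℝ} (hf : Continuous f)
    {v : ℝ} (hv : ∀ z ∈ K, v ≤ f z) {ε : ℝ} (hε : 0 < ε) :
    ∃ δ : ℝ, 0 < δ ∧ ∀ z ∈ K, f z ≤ v + δ → ∃ w ∈ K, f w = v ∧ dist z w < ε := by
  classical
  set E := {w ∈ K | f w = v} with hE
  set U := ⋃ w ∈ E, Metric.ball w ε with hU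
  have hUopen : IsOpen U := isOpen_biUnion fun _ _ => Metric.isOpen_ball
  have hKU : IsCompact (K \ U) := hK.diff hUopen
  have key : ∀ z ∈ K, z ∈ U → ∃ w ∈ K, f w = v ∧ dist z w < ε := by
    intro z hz hzU
    simp only [hU, Set.mem_iUnion, Metric.mem_ball, exists_prop] at hzU
    obtain ⟨w, hw, hd⟩ := hzU
    exact ⟨w, hw.1, hw.2, hd⟩
  rcases Set.eq_empty_or_nonempty (K \ U) with hem | hnem
  · refine ⟨1, one_pos, fun z hz _ => key z hz ?_⟩
    by_contra hzU
    exact (Set.eq_empty_iff_forall_notMem.mp hem z) ⟨hz, hzU⟩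
  · obtain ⟨z₀, hz₀, hmin⟩ := hKU.exists_isMinOn hnem hf.continuousOn
    have hz₀v : v < f z₀ := by
      rcases lt_or_eq_of_le (hv z₀ hz₀.1) with h | h
      · exact h
      · exact absurd (Set.mem_biUnion (show z₀ ∈ E from ⟨hz₀.1, h.symm⟩)
          (Metric.mem_ball_self hε)) hz₀.2
    refine ⟨(f z₀ - v) / 2, by linarith, fun z hz hfz => key z hz ?_⟩
    by_contra hzU
    have := (isMinOn_iff.mp hmin) z ⟨hz, hzU⟩
    linarith

/-! ### Finiteness of decompositions and boundedness -/

variable {A : Type} [Fintype A] [DecidableEq A]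

/-- The set of all decomposition triples of the images of the substitution. -/
def DSet (σ : A → List A) : Set (Triple A) := {t | ∃ b, σ b = t.1 ++ t.2.1 :: t.2.2}

lemma dset_finite (σ : A → List A) : (DSet σ).Finite := by
  have hsub : DSet σ ⊆ ⋃ b : A, {t : Triple A | σ b = t.1 ++ t.2.1 :: t.2.2} := by
    rintro t ⟨b, hb⟩; exact Set.mem_iUnion.2 ⟨b, hb⟩
  refine Set.Finite.subset (Set.finite_iUnion fun b => ?_) hsub
  have himg : (fun t : Triple A => t.1.length) ''
      {t : Triple A | σ b = t.1 ++ t.2.1 :: t.2.2} ⊆ Set.Iic (σ b).length := by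
    rintro _ ⟨⟨p, c, s⟩, hp, rfl⟩
    simp only [Set.mem_setOf_eq] at hp
    simp only [Set.mem_Iic]
    have := congrArg List.length hp
    simp only [List.length_append, List.length_cons] at this
    omega
  refine Set.Finite.of_finite_image (Set.Finite.subset (Set.finite_Iic _) himg) ?_
  rintro ⟨p, c, s⟩ hp ⟨p', c', s'⟩ hp' hl
  simp only [Set.mem_setOf_eq] at hp hp'
  simp only at hl
  obtain ⟨rfl, h2⟩ := List.append_inj (hp.symm.trans hp') hl
  simp only [List.cons.injEq] at h2
  obtain ⟨rfl, rfl⟩ := h2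
  rfl

/-- A crude bound for `wordSum` over all decomposition prefixes. -/
def Cb (σ : A → List A) (γ : A → ℂ) : ℝ :=
  ∑ b : A, ((σ b).map fun c => ‖γ c‖).sum

lemma list_map_abs_nonneg (γ : A → ℂ) (l : List A) :
    0 ≤ (l.map fun c => ‖γ c‖).sum := by
  apply List.sum_nonneg
  intro x hx
  simp only [List.mem_map] at hx
  obtain ⟨c, _, rfl⟩ := hx
  exact norm_nonneg _

lemma list_abs_sum_le (γ : A → ℂ) (l : List A) :
    ‖(l.map γ).sum‖ ≤ (l.map fun c => ‖γ c‖).sum := by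
  induction l with
  | nil => simp
  | cons hd tl ih =>
      simp only [List.map_cons, List.sum_cons]
      exact (norm_add_le _ _).trans (by linarith [ih])

lemma wordSum_abs_le {σ : A → List A} {γ : A → ℂ} {t : Triple A}
    (ht : t ∈ DSet σ) : ‖wordSum γ t.1‖ ≤ Cb σ γ := by
  obtain ⟨b, hb⟩ := ht
  have h1 : ‖wordSum γ t.1‖ ≤ (t.1.map fun c => ‖γ c‖).sum :=
    list_abs_sum_le γ t.1
  have h2 : (t.1.map fun c => ‖γ c‖).sum ≤
      ((σ b).map fun c => ‖γ c‖).sum := by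
    rw [hb, List.map_append, List.sum_append]
    have h0 := list_map_abs_nonneg γ (t.2.1 :: t.2.2)
    linarith
  have h3 : ((σ b).map fun c => ‖γ c‖).sum ≤ Cb σ γ :=
    Finset.single_le_sum (f := fun b => ((σ b).map fun c => ‖γ c‖).sum)
      (fun i _ => list_map_abs_nonneg γ (σ i)) (Finset.mem_univ b)
  linarith

lemma mem_dset_of_inS {σ : A → List A} {a : A} {x : ℕ → Triple A}
    (hx : InS σ a x) : ∀ m, x m ∈ DSet σ := by
  intro m
  cases m with
  | zero => exact ⟨a, hx.1⟩
  | succ n => exact ⟨(x n).2.1, hx.2 n⟩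

/-! ### Topology on sequences of triples -/

instance tripleTop : TopologicalSpace (Triple A) := ⊥
instance tripleDiscrete : DiscreteTopology (Triple A) := ⟨rfl⟩

lemma summable_aux {β : ℂ} (hβ : 1 < ‖β‖) (c : ℝ) :
    Summable (fun m : ℕ => (‖β‖)⁻¹ ^ (m + 1) * c) := by
  have h0 : (0:ℝ) ≤ (‖β‖)⁻¹ := inv_nonneg.2 (norm_nonneg β)
  have h1 : (‖β‖)⁻¹ < 1 := inv_lt_one_of_one_lt₀ hβ
  have := (summable_geometric_of_lt_one h0 h1).mul_left ((‖β‖)⁻¹ * c)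
  refine this.congr fun m => ?_
  rw [pow_succ]
  ring

lemma zrep_term_bound {σ : A → List A} {β : ℂ} (γ : A → ℂ) {x : ℕ → Triple A}
    (hx : ∀ m, x m ∈ DSet σ) (m : ℕ) :
    ‖β⁻¹ ^ (m + 1) * wordSum γ (x m).1‖ ≤ (‖β‖)⁻¹ ^ (m + 1) * Cb σ γ := by
  rw [norm_mul, norm_pow, norm_inv]
  have h1 : ‖β‖ = ‖β‖ := rfl
  rw [h1]
  refine mul_le_mul_of_nonneg_left ?_
    (pow_nonneg (inv_nonneg.2 (norm_nonneg β)) _)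
  exact wordSum_abs_le (hx m)

lemma frac_abs_bound (σ : A → List A) {β : ℂ} (hβ : 1 < ‖β‖) (γ : A → ℂ)
    (a : A) : ∀ z ∈ Frac σ β γ a,
      ‖z‖ ≤ ∑' m : ℕ, (‖β‖)⁻¹ ^ (m + 1) * Cb σ γ := by
  rintro _ ⟨x, hx, rfl⟩
  have hD := mem_dset_of_inS hx
  have hsum := summable_aux hβ (Cb σ γ)
  have hnorm : Summable fun m : ℕ => ‖β⁻¹ ^ (m + 1) * wordSum γ (x m).1‖ :=
    Summable.of_nonneg_of_le (fun m => norm_nonneg _) (zrep_term_bound γ hD) hsum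
  calc ‖zrep β γ x‖ = ‖∑' m : ℕ, β⁻¹ ^ (m + 1) * wordSum γ (x m).1‖ := rfl
    _ ≤ ∑' m : ℕ, ‖β⁻¹ ^ (m + 1) * wordSum γ (x m).1‖ := norm_tsum_le_tsum_norm hnorm
    _ ≤ ∑' m : ℕ, (‖β‖)⁻¹ ^ (m + 1) * Cb σ γ :=
        Summable.tsum_le_tsum (zrep_term_bound γ hD) hnorm hsum

lemma fracDec_subset {σ : A → List A} {β : ℂ} {γ : A → ℂ} {a : A} {d : Triple A} :
    FracDec σ β γ a d ⊆ Frac σ β γ a := by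
  rintro z ⟨x, h1, _, h3⟩; exact ⟨x, h1, h3⟩

lemma fracDec_compact (σ : A → List A) {β : ℂ} (hβ : 1 < ‖β‖) (γ : A → ℂ)
    (a : A) (d : Triple A) : IsCompact (FracDec σ β γ a d) := by
  classical
  set S : Set (ℕ → Triple A) := Set.pi Set.univ (fun _ => DSet σ) with hS
  have hScomp : IsCompact S := isCompact_univ_pi fun _ => (dset_finite σ).isCompact
  set X : Set (ℕ → Triple A) := {x | InS σ a x ∧ x 0 = d} with hX
  have hXS : X ⊆ S := fun x hx m _ => mem_dset_of_inS hx.1 m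
  have hXclosed : IsClosed X := by
    have h1 : IsClosed ((fun x : ℕ → Triple A => x 0) ⁻¹'
        {t : Triple A | σ a = t.1 ++ t.2.1 :: t.2.2}) :=
      IsClosed.preimage (continuous_apply 0) (isClosed_discrete _)
    have h2 : ∀ m : ℕ, IsClosed ((fun x : ℕ → Triple A => (x m, x (m + 1))) ⁻¹'
        {q : Triple A × Triple A | σ q.1.2.1 = q.2.1 ++ q.2.2.1 :: q.2.2.2}) := fun m =>
      IsClosed.preimage ((continuous_apply m).prodMk (continuous_apply (m + 1)))
        (isClosed_discrete _)
    have h3 : IsClosed ((fun x : ℕ → Triple A => x 0) ⁻¹' {d}) :=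
      IsClosed.preimage (continuous_apply 0) (isClosed_discrete _)
    have hXeq : X = (((fun x : ℕ → Triple A => x 0) ⁻¹'
        {t : Triple A | σ a = t.1 ++ t.2.1 :: t.2.2}) ∩
        ⋂ m : ℕ, ((fun x : ℕ → Triple A => (x m, x (m + 1))) ⁻¹'
          {q : Triple A × Triple A | σ q.1.2.1 = q.2.1 ++ q.2.2.1 :: q.2.2.2})) ∩
        ((fun x : ℕ → Triple A => x 0) ⁻¹' {d}) := by
      ext x
      simp only [hX, Set.mem_setOf_eq, Set.mem_inter_iff, Set.mem_preimage,
        Set.mem_iInter, Set.mem_singleton_iff, InS]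
      try tauto
    rw [hXeq]
    exact ((h1.inter (isClosed_iInter h2)).inter h3)
  have hXcomp : IsCompact X := hScomp.of_isClosed_subset hXclosed hXS
  have hcont : ContinuousOn (zrep β γ : (ℕ → Triple A) → ℂ) S := by
    have : (zrep β γ : (ℕ → Triple A) → ℂ) =
        fun x => ∑' m : ℕ, β⁻¹ ^ (m + 1) * wordSum γ (x m).1 := rfl
    rw [this]
    refine continuousOn_tsum (u := fun m => (‖β‖)⁻¹ ^ (m + 1) * Cb σ γ)
      (fun i => ?_) (summable_aux hβ _) (fun m x hx => ?_)
    · exact (continuous_const.mul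
        ((continuous_of_discreteTopology
          (f := fun t : Triple A => wordSum γ t.1)).comp (continuous_apply i))).continuousOn
    · exact zrep_term_bound γ (fun m => hx m (Set.mem_univ m)) m
  have himg : FracDec σ β γ a d = zrep β γ '' X := by
    ext z
    constructor
    · rintro ⟨x, h1, h2, h3⟩; exact ⟨x, ⟨h1, h2⟩, h3⟩
    · rintro ⟨x, ⟨h1, h2⟩, h3⟩; exact ⟨x, h1, h2, h3⟩
  rw [himg]
  exact hXcomp.image_of_continuousOn (hcont.mono hXS)

end CLAux

set_option maxHeartbeats 3000000 in
/-- **Lemma 6.7.** Let `τ ∈ Ψ_a` and let `(p,c,s)`, `(p̄,c̄,s̄)` be decompositions of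
`σ(a)` with `E_{a,(p,c,s)}(τ)`, `E_{a,(p̄,c̄,s̄)}(τ)` nonempty and disjoint, and let
`D` be the minimal distance between them. Then `D > 0` and for every sequence
`τ_k → τ` in `S¹`,
`liminf_k |v_{a,(p,c,s)}(τ_k) − v_{a,(p̄,c̄,s̄)}(τ_k)| / ⟦τ − τ_k⟧ ≥ D`. -/
theorem central_lemma {A : Type} [Fintype A] [DecidableEq A]
    (σ : A → List A) (hprim : IEMWandering.Primitive σ)
    (β : ℂ) (γ : A → ℂ) (hβ : 1 < ‖β‖)
    (hγ : IEMWandering.IsEigenvector σ β γ)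
    (a : A) (τ : ℂ) (hτ : τ ∈ IEMWandering.Psi σ β γ a)
    (d d' : IEMWandering.Triple A)
    (hd : IEMWandering.IsDecomp σ a d) (hd' : IEMWandering.IsDecomp σ a d')
    (hne : (IEMWandering.EDec σ β γ a d τ).Nonempty)
    (hne' : (IEMWandering.EDec σ β γ a d' τ).Nonempty)
    (hdisj : IEMWandering.EDec σ β γ a d τ ∩ IEMWandering.EDec σ β γ a d' τ = ∅)
    (D : ℝ)
    (hD : D = sInf { r : ℝ | ∃ z ∈ IEMWandering.EDec σ β γ a d τ,
      ∃ z' ∈ IEMWandering.EDec σ β γ a d' τ, r = ‖z - z'‖ }) :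
    0 < D ∧
    ∀ τk : ℕ → ℂ, (∀ k, ‖τk k‖ = 1) → (∀ k, τk k ≠ τ) →
      Filter.Tendsto τk Filter.atTop (nhds τ) →
      (D : EReal) ≤ Filter.liminf (fun k : ℕ =>
        ((|IEMWandering.vDec σ β γ a d (τk k) - IEMWandering.vDec σ β γ a d' (τk k)| /
            IEMWandering.arcDist τ (τk k) : ℝ) : EReal)) Filter.atTop := by
  classical
  obtain ⟨hτ1, -⟩ := hτ
  have hτ0 : τ ≠ 0 := by
    intro h; rw [h] at hτ1; simp at hτ1
  set K := IEMWandering.FracDec σ β γ a d with hKdef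
  set K' := IEMWandering.FracDec σ β γ a d' with hK'def
  have hKc : IsCompact K := CLAux.fracDec_compact σ hβ γ a d
  have hK'c : IsCompact K' := CLAux.fracDec_compact σ hβ γ a d'
  set Rf := ∑' m : ℕ, (‖β‖)⁻¹ ^ (m + 1) * CLAux.Cb σ γ with hRfdef
  have hRf : ∀ z ∈ IEMWandering.Frac σ β γ a, ‖z‖ ≤ Rf :=
    CLAux.frac_abs_bound σ hβ γ a
  have hKF : K ⊆ IEMWandering.Frac σ β γ a := CLAux.fracDec_subset
  have hK'F : K' ⊆ IEMWandering.Frac σ β γ a := CLAux.fracDec_subset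
  have hbdd : ∀ (τ'' : ℂ) (S : Set ℂ), S ⊆ IEMWandering.Frac σ β γ a →
      BddBelow ((fun z => (τ'' * z).re) '' S) := by
    intro τ'' S hs
    refine ⟨-(‖τ''‖ * Rf), ?_⟩
    rintro y ⟨z, hz, rfl⟩
    have h1 := neg_abs_le ((τ'' * z).re)
    have h2 := Complex.abs_re_le_norm (τ'' * z)
    have h3 : ‖τ'' * z‖ ≤ ‖τ''‖ * Rf := by
      rw [norm_mul]
      exact mul_le_mul_of_nonneg_left (hRf z (hs hz)) (norm_nonneg τ'')
    simp only
    linarith only [h1, h2, h3]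
  set v := IEMWandering.vDir σ β γ a τ with hvdef
  have hvK : ∀ z ∈ K, v ≤ (τ * z).re := by
    intro z hz
    rw [hvdef]
    show sInf ((fun z => (τ * z).re) '' IEMWandering.Frac σ β γ a) ≤ (τ * z).re
    exact csInf_le (hbdd τ _ subset_rfl) ⟨z, hKF hz, rfl⟩
  have hvK' : ∀ z ∈ K', v ≤ (τ * z).re := by
    intro z hz
    rw [hvdef]
    show sInf ((fun z => (τ * z).re) '' IEMWandering.Frac σ β γ a) ≤ (τ * z).re
    exact csInf_le (hbdd τ _ subset_rfl) ⟨z, hK'F hz, rfl⟩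
  set E := IEMWandering.EDec σ β γ a d τ with hEdef
  set E' := IEMWandering.EDec σ β γ a d' τ with hE'def
  have hEeq : E = {z ∈ K | (τ * z).re = v} := by
    ext z
    simp only [hEdef, IEMWandering.EDec, IEMWandering.ExtPts, Set.mem_inter_iff,
      Set.mem_setOf_eq, ← hKdef, ← hvdef]
    constructor
    · rintro ⟨⟨hzF, hzre⟩, hzK⟩; exact ⟨hzK, hzre⟩
    · rintro ⟨hzK, hzre⟩; exact ⟨⟨hKF hzK, hzre⟩, hzK⟩
  have hE'eq : E' = {z ∈ K' | (τ * z).re = v} := by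
    ext z
    simp only [hE'def, IEMWandering.EDec, IEMWandering.ExtPts, Set.mem_inter_iff,
      Set.mem_setOf_eq, ← hK'def, ← hvdef]
    constructor
    · rintro ⟨⟨hzF, hzre⟩, hzK⟩; exact ⟨hzK, hzre⟩
    · rintro ⟨hzK, hzre⟩; exact ⟨⟨hK'F hzK, hzre⟩, hzK⟩
  obtain ⟨w₀, hw₀⟩ := hne
  obtain ⟨w₀', hw₀'⟩ := hne'
  have hEK : E ⊆ K := by rw [hEeq]; exact fun z hz => hz.1
  have hE'K : E' ⊆ K' := by rw [hE'eq]; exact fun z hz => hz.1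
  have hKne : K.Nonempty := ⟨w₀, hEK hw₀⟩
  have hK'ne : K'.Nonempty := ⟨w₀', hE'K hw₀'⟩
  have hcontre : ∀ τ'' : ℂ, Continuous fun z : ℂ => (τ'' * z).re := fun τ'' =>
    Complex.continuous_re.comp (continuous_const.mul continuous_id)
  have hEc : IsCompact E := by
    rw [hEeq]
    exact hKc.inter_right (isClosed_eq (hcontre τ) continuous_const)
  have hE'c : IsCompact E' := by
    rw [hE'eq]
    exact hK'c.inter_right (isClosed_eq (hcontre τ) continuous_const)
  have hDree : ∀ w ∈ E, (τ * w).re = v := fun w hw => by rw [hEeq] at hw; exact hw.2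
  have hDree' : ∀ w ∈ E', (τ * w).re = v := fun w hw => by rw [hE'eq] at hw; exact hw.2
  have hDsetne : {r : ℝ | ∃ z ∈ E, ∃ z' ∈ E', r = ‖z - z'‖}.Nonempty :=
    ⟨‖w₀ - w₀'‖, w₀, hw₀, w₀', hw₀', rfl⟩
  have hDsetim : {r : ℝ | ∃ z ∈ E, ∃ z' ∈ E', r = ‖z - z'‖} =
      (fun p : ℂ × ℂ => ‖p.1 - p.2‖) '' (E ×ˢ E') := by
    ext r
    constructor
    · rintro ⟨z, hz, z', hz', rfl⟩; exact ⟨(z, z'), ⟨hz, hz'⟩, rfl⟩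
    · rintro ⟨⟨z, z'⟩, ⟨hz, hz'⟩, rfl⟩; exact ⟨z, hz, z', hz', rfl⟩
  have hDc : IsCompact ((fun p : ℂ × ℂ => ‖p.1 - p.2‖) '' (E ×ˢ E')) :=
    (hEc.prod hE'c).image (by continuity)
  have hDmem : D ∈ {r : ℝ | ∃ z ∈ E, ∃ z' ∈ E', r = ‖z - z'‖} := by
    rw [hD, hDsetim]
    exact hDc.sInf_mem (hDsetim ▸ hDsetne)
  obtain ⟨zs, hzs, zs', hzs', hDeq⟩ := hDmem
  have hDpos : 0 < D := by
    rcases (norm_nonneg (zs - zs')).lt_or_eq with h | h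
    · rw [hDeq]; exact h
    · exfalso
      have h0 : zs - zs' = 0 := norm_eq_zero.mp h.symm
      have hzz : zs = zs' := sub_eq_zero.mp h0
      exact (Set.eq_empty_iff_forall_notMem.mp hdisj zs)
        ⟨hzs, by rw [hzz]; exact hzs'⟩
  refine ⟨hDpos, ?_⟩
  intro τk hτk1 hτkne hτkto
  have habsim : ∀ w w' : ℂ, (τ * w).re = (τ * w').re →
      ‖w - w'‖ = |(τ * w).im - (τ * w').im| := by
    intro w w' hre
    have h1 : ‖τ * (w - w')‖ = ‖w - w'‖ := by
      rw [norm_mul, hτ1, one_mul]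
    have h2 : (τ * (w - w')).re = 0 := by
      rw [mul_sub, Complex.sub_re]; linarith only [hre]
    have h3 : (τ * (w - w')).im = (τ * w).im - (τ * w').im := by
      rw [mul_sub, Complex.sub_im]
    have h4 := Complex.abs_im_le_norm (τ * (w - w'))
    have h5 := Complex.norm_le_abs_re_add_abs_im (τ * (w - w'))
    rw [h2] at h5
    simp only [abs_zero, zero_add] at h5
    rw [← h3, ← h1]
    exact le_antisymm h5 h4
  have hsep : ∀ t ∈ (fun w => (τ * w).im) '' E, ∀ t' ∈ (fun w => (τ * w).im) '' E',
      D ≤ |t - t'| := by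
    rintro _ ⟨w, hw, rfl⟩ _ ⟨w', hw', rfl⟩
    have h1 : D ≤ ‖w - w'‖ := by
      rw [hD]
      refine csInf_le ⟨0, ?_⟩ ⟨w, hw, w', hw', rfl⟩
      rintro r ⟨z, _, z', _, rfl⟩
      exact norm_nonneg _
    have h2 := habsim w w' (by rw [hDree w hw, hDree' w' hw'])
    simp only
    linarith only [h1, h2]
  have hRf0 : 0 ≤ Rf := le_trans (norm_nonneg w₀) (hRf w₀ (hKF (hEK hw₀)))
  have himle : ∀ z ∈ IEMWandering.Frac σ β γ a, |(τ * z).im| ≤ Rf := by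
    intro z hz
    have h1 := Complex.abs_im_le_norm (τ * z)
    rw [norm_mul, hτ1, one_mul] at h1
    exact h1.trans (hRf z hz)
  have harc : ∀ k, IEMWandering.arcDist τ (τk k) = |Complex.arg (τk k / τ)| := by
    intro k
    rw [IEMWandering.arcDist, show τ / τk k = (τk k / τ)⁻¹ by rw [inv_div], Complex.arg_inv]
    split
    · rename_i h; rw [h]
    · rw [abs_neg]
  have hto : Filter.Tendsto (fun k => |Complex.arg (τk k / τ)|) Filter.atTop (nhds 0) := by
    have h1 : Filter.Tendsto (fun k => τk k / τ) Filter.atTop (nhds 1) := by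
      have := hτkto.div_const τ
      rwa [div_self hτ0] at this
    have h2 : ContinuousAt Complex.arg 1 := Complex.continuousAt_arg Complex.one_mem_slitPlane
    have h3 := h2.tendsto.comp h1
    rw [Complex.arg_one] at h3
    simpa using h3.abs
  have hmain : ∀ b : ℝ, b < D → ∀ᶠ k in Filter.atTop,
      (b : EReal) < ((|IEMWandering.vDec σ β γ a d (τk k) -
        IEMWandering.vDec σ β γ a d' (τk k)| /
          IEMWandering.arcDist τ (τk k) : ℝ) : EReal) := by
    intro b hb
    set ε := min (1/2 : ℝ) (min D ((D - b) / (2 * (1 + D)))) with hεdef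
    have hε0 : 0 < ε := by
      refine lt_min (by norm_num) (lt_min hDpos ?_)
      have h1 : 0 < D - b := by linarith only [hb]
      positivity
    have hεhalf : ε ≤ 1/2 := min_le_left _ _
    have hεD : ε ≤ D := le_trans (min_le_right _ _) (min_le_left _ _)
    have hεb : ε ≤ (D - b) / (2 * (1 + D)) := le_trans (min_le_right _ _) (min_le_right _ _)
    have hεb2 : ε * (2 * (1 + D)) ≤ D - b := by
      rw [← le_div_iff₀ (by positivity : (0:ℝ) < 2 * (1 + D))]
      exact hεb
    obtain ⟨δ₂, hδ₂0, hδ₂⟩ := CLAux.approx_ext hKc (hcontre τ) hvK hε0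
    obtain ⟨δ₂', hδ₂'0, hδ₂'⟩ := CLAux.approx_ext hK'c (hcontre τ) hvK' hε0
    set δ := min (min 1 (Real.sqrt ε)) (min (δ₂ / (4 * Rf + 1)) (δ₂' / (4 * Rf + 1)))
      with hδdef
    have hδ0 : 0 < δ := by
      refine lt_min (lt_min one_pos (Real.sqrt_pos.2 hε0)) (lt_min ?_ ?_)
      · positivity
      · positivity
    have hδ1 : δ ≤ 1 := le_trans (min_le_left _ _) (min_le_left _ _)
    have hδsq : δ ≤ Real.sqrt ε := le_trans (min_le_left _ _) (min_le_right _ _)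
    have hδa : δ ≤ δ₂ / (4 * Rf + 1) := le_trans (min_le_right _ _) (min_le_left _ _)
    have hδb : δ ≤ δ₂' / (4 * Rf + 1) := le_trans (min_le_right _ _) (min_le_right _ _)
    filter_upwards [hto.eventually_lt_const hδ0] with k hk
    set τ' := τk k with hτ'def
    set θ := Complex.arg (τ' / τ) with hθdef
    have hθδ : |θ| < δ := hk
    have hu1 : ‖τ' / τ‖ = 1 := by rw [norm_div, hτk1 k, hτ1]; norm_num
    have hu0 : τ' / τ ≠ 0 := by
      intro h; rw [h] at hu1; simp at hu1
    have hure : (τ' / τ).re = Real.cos θ := by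
      rw [hθdef, Complex.cos_arg hu0, hu1, div_one]
    have huim : (τ' / τ).im = Real.sin θ := by
      rw [hθdef, Complex.sin_arg, hu1, div_one]
    have hτ'u : τ' = (τ' / τ) * τ := by field_simp
    have hθ0 : θ ≠ 0 := by
      intro h
      have h1 := Complex.norm_mul_cos_add_sin_mul_I (τ' / τ)
      rw [hu1, ← hθdef, h] at h1
      simp only [Complex.ofReal_zero, Complex.cos_zero, Complex.sin_zero, zero_mul,
        add_zero, Complex.ofReal_one, one_mul] at h1
      exact hτkne k ((div_eq_one_iff_eq hτ0).mp h1.symm)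
    have hθpos : 0 < |θ| := abs_pos.2 hθ0
    have hθ1 : |θ| ≤ 1 := le_trans hθδ.le hδ1
    have hθsq : |θ| ^ 2 ≤ ε := by
      have h1 : |θ| ≤ Real.sqrt ε := le_trans hθδ.le hδsq
      have h2 := pow_le_pow_left₀ (abs_nonneg θ) h1 2
      rwa [Real.sq_sqrt hε0.le] at h2
    have hc2 : (1:ℝ)/2 ≤ Real.cos θ := by
      have h1 := Real.one_sub_sq_div_two_le_cos (x := θ)
      have h2 : θ ^ 2 = |θ| ^ 2 := (_root_.sq_abs θ).symm
      linarith only [h1, h2, hθsq, hεhalf]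
    have hc0 : (0:ℝ) ≤ Real.cos θ := by linarith only [hc2]
    have hsinabs : |Real.sin θ| = Real.sin |θ| := by
      rcases abs_cases θ with ⟨h, h'⟩ | ⟨h, h'⟩
      · rw [h]
        exact _root_.abs_of_nonneg (Real.sin_nonneg_of_nonneg_of_le_pi h'
          (by linarith only [Real.two_le_pi, hθ1, h]))
      · rw [h, Real.sin_neg]
        exact _root_.abs_of_nonpos (Real.sin_nonpos_of_nonpos_of_neg_pi_le h'.le
          (by linarith only [Real.two_le_pi, hθ1, h]))
    have hsθ : |Real.sin θ| ≤ |θ| := Real.abs_sin_le_abs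
    have hsabs : (1 - ε) * |θ| ≤ |Real.sin θ| := by
      rw [hsinabs]
      have h1 := Real.sin_gt_sub_cube hθpos
      linarith only [h1, mul_le_mul_of_nonneg_right hθsq (abs_nonneg θ),
        mul_nonneg hε0.le (abs_nonneg θ)]
    obtain ⟨z₁, hz₁K, hz₁min, hz₁le⟩ :=
      hKc.exists_sInf_image_eq_and_le hKne ((hcontre τ').continuousOn)
    obtain ⟨z₁', hz₁'K, hz₁'min, hz₁'le⟩ :=
      hK'c.exists_sInf_image_eq_and_le hK'ne ((hcontre τ').continuousOn)
    have hm : IEMWandering.vDec σ β γ a d τ' = (τ' * z₁).re := by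
      show sInf ((fun z => (τ' * z).re) '' IEMWandering.FracDec σ β γ a d) = (τ' * z₁).re
      rw [← hKdef]
      exact hz₁min
    have hm' : IEMWandering.vDec σ β γ a d' τ' = (τ' * z₁').re := by
      show sInf ((fun z => (τ' * z).re) '' IEMWandering.FracDec σ β γ a d') = (τ' * z₁').re
      rw [← hK'def]
      exact hz₁'min
    have hkey : ∀ z : ℂ, (τ' * z).re = Real.cos θ * (τ * z).re - Real.sin θ * (τ * z).im := by
      intro z
      conv_lhs => rw [hτ'u]
      rw [mul_assoc, Complex.mul_re, hure, huim]
    have hupper : ∀ w ∈ E, IEMWandering.vDec σ β γ a d τ' ≤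
        Real.cos θ * v - Real.sin θ * (τ * w).im := by
      intro w hw
      have h1 : IEMWandering.vDec σ β γ a d τ' ≤ (τ' * w).re := by
        rw [hm]; exact hz₁le w (hEK hw)
      rwa [hkey w, hDree w hw] at h1
    have hupper' : ∀ w ∈ E', IEMWandering.vDec σ β γ a d' τ' ≤
        Real.cos θ * v - Real.sin θ * (τ * w).im := by
      intro w hw
      have h1 : IEMWandering.vDec σ β γ a d' τ' ≤ (τ' * w).re := by
        rw [hm']; exact hz₁'le w (hE'K hw)
      rwa [hkey w, hDree' w hw] at h1
    have hlow : Real.cos θ * v - Real.sin θ * (τ * z₁).im ≤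
        IEMWandering.vDec σ β γ a d τ' := by
      rw [hm, hkey z₁]
      have h1 := hvK z₁ hz₁K
      linarith only [mul_le_mul_of_nonneg_left h1 hc0]
    have hlow' : Real.cos θ * v - Real.sin θ * (τ * z₁').im ≤
        IEMWandering.vDec σ β γ a d' τ' := by
      rw [hm', hkey z₁']
      have h1 := hvK' z₁' hz₁'K
      linarith only [mul_le_mul_of_nonneg_left h1 hc0]
    have hreθbound : (τ * z₁).re ≤ v + δ₂ := by
      have e0 : IEMWandering.vDec σ β γ a d τ' =
          Real.cos θ * (τ * z₁).re - Real.sin θ * (τ * z₁).im := by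
        rw [hm, hkey z₁]
      have e1 : Real.cos θ * ((τ * z₁).re - v) ≤
          Real.sin θ * ((τ * z₁).im - (τ * w₀).im) := by
        have h1 := hupper w₀ hw₀
        have h2 : Real.cos θ * (τ * z₁).re - Real.sin θ * (τ * z₁).im ≤
            Real.cos θ * v - Real.sin θ * (τ * w₀).im := by rw [← e0]; exact h1
        linarith only [h2]
      have e2 : Real.sin θ * ((τ * z₁).im - (τ * w₀).im) ≤ |θ| * (2 * Rf) := by
        have h1 : Real.sin θ * ((τ * z₁).im - (τ * w₀).im) ≤
            |Real.sin θ| * |(τ * z₁).im - (τ * w₀).im| := by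
          rw [← abs_mul]; exact le_abs_self _
        have h2 : |(τ * z₁).im - (τ * w₀).im| ≤ 2 * Rf := by
          have i1 := himle z₁ (hKF hz₁K)
          have i2 := himle w₀ (hKF (hEK hw₀))
          have i3 := abs_sub ((τ * z₁).im) ((τ * w₀).im)
          linarith only [i1, i2, i3]
        calc Real.sin θ * ((τ * z₁).im - (τ * w₀).im)
            ≤ |Real.sin θ| * |(τ * z₁).im - (τ * w₀).im| := h1
          _ ≤ |θ| * (2 * Rf) := mul_le_mul hsθ h2 (abs_nonneg _) (abs_nonneg θ)
      have e3 : (τ * z₁).re - v ≤ 4 * Rf * |θ| := by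
        rcases le_or_gt ((τ * z₁).re - v) 0 with hle | hlt
        · linarith only [hle, mul_nonneg (mul_nonneg (by norm_num : (0:ℝ) ≤ 4) hRf0)
            (abs_nonneg θ)]
        · have hp : 0 ≤ (Real.cos θ - 1/2) * ((τ * z₁).re - v) :=
            mul_nonneg (by linarith only [hc2]) hlt.le
          linarith only [e1, e2, hp]
      have e4 : 4 * Rf * |θ| ≤ δ₂ := by
        have h1 : |θ| ≤ δ₂ / (4 * Rf + 1) := le_trans hθδ.le hδa
        rw [le_div_iff₀ (by linarith only [hRf0] : (0:ℝ) < 4 * Rf + 1)] at h1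
        linarith only [h1, abs_nonneg θ]
      linarith only [e3, e4]
    have hreθbound' : (τ * z₁').re ≤ v + δ₂' := by
      have e0 : IEMWandering.vDec σ β γ a d' τ' =
          Real.cos θ * (τ * z₁').re - Real.sin θ * (τ * z₁').im := by
        rw [hm', hkey z₁']
      have e1 : Real.cos θ * ((τ * z₁').re - v) ≤
          Real.sin θ * ((τ * z₁').im - (τ * w₀').im) := by
        have h1 := hupper' w₀' hw₀'
        have h2 : Real.cos θ * (τ * z₁').re - Real.sin θ * (τ * z₁').im ≤
            Real.cos θ * v - Real.sin θ * (τ * w₀').im := by rw [← e0]; exact h1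
        linarith only [h2]
      have e2 : Real.sin θ * ((τ * z₁').im - (τ * w₀').im) ≤ |θ| * (2 * Rf) := by
        have h1 : Real.sin θ * ((τ * z₁').im - (τ * w₀').im) ≤
            |Real.sin θ| * |(τ * z₁').im - (τ * w₀').im| := by
          rw [← abs_mul]; exact le_abs_self _
        have h2 : |(τ * z₁').im - (τ * w₀').im| ≤ 2 * Rf := by
          have i1 := himle z₁' (hK'F hz₁'K)
          have i2 := himle w₀' (hK'F (hE'K hw₀'))
          have i3 := abs_sub ((τ * z₁').im) ((τ * w₀').im)
          linarith only [i1, i2, i3]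
        calc Real.sin θ * ((τ * z₁').im - (τ * w₀').im)
            ≤ |Real.sin θ| * |(τ * z₁').im - (τ * w₀').im| := h1
          _ ≤ |θ| * (2 * Rf) := mul_le_mul hsθ h2 (abs_nonneg _) (abs_nonneg θ)
      have e3 : (τ * z₁').re - v ≤ 4 * Rf * |θ| := by
        rcases le_or_gt ((τ * z₁').re - v) 0 with hle | hlt
        · linarith only [hle, mul_nonneg (mul_nonneg (by norm_num : (0:ℝ) ≤ 4) hRf0)
            (abs_nonneg θ)]
        · have hp : 0 ≤ (Real.cos θ - 1/2) * ((τ * z₁').re - v) :=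
            mul_nonneg (by linarith only [hc2]) hlt.le
          linarith only [e1, e2, hp]
      have e4 : 4 * Rf * |θ| ≤ δ₂' := by
        have h1 : |θ| ≤ δ₂' / (4 * Rf + 1) := le_trans hθδ.le hδb
        rw [le_div_iff₀ (by linarith only [hRf0] : (0:ℝ) < 4 * Rf + 1)] at h1
        linarith only [h1, abs_nonneg θ]
      linarith only [e3, e4]
    obtain ⟨w₁, hw₁K, hw₁v, hw₁d⟩ := hδ₂ z₁ hz₁K hreθbound
    obtain ⟨w₁', hw₁'K, hw₁'v, hw₁'d⟩ := hδ₂' z₁' hz₁'K hreθbound'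
    have hw₁E : w₁ ∈ E := by rw [hEeq]; exact ⟨hw₁K, hw₁v⟩
    have hw₁'E' : w₁' ∈ E' := by rw [hE'eq]; exact ⟨hw₁'K, hw₁'v⟩
    have htclose : |(τ * z₁).im - (τ * w₁).im| ≤ ε := by
      have h1 := Complex.abs_im_le_norm (τ * (z₁ - w₁))
      rw [norm_mul, hτ1, one_mul] at h1
      have h2 : (τ * (z₁ - w₁)).im = (τ * z₁).im - (τ * w₁).im := by
        rw [mul_sub, Complex.sub_im]
      rw [h2] at h1
      have h3 : ‖z₁ - w₁‖ ≤ ε := by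
        have h4 := hw₁d
        rw [Complex.dist_eq] at h4
        linarith only [h4]
      linarith only [h1, h3]
    have htclose' : |(τ * z₁').im - (τ * w₁').im| ≤ ε := by
      have h1 := Complex.abs_im_le_norm (τ * (z₁' - w₁'))
      rw [norm_mul, hτ1, one_mul] at h1
      have h2 : (τ * (z₁' - w₁')).im = (τ * z₁').im - (τ * w₁').im := by
        rw [mul_sub, Complex.sub_im]
      rw [h2] at h1
      have h3 : ‖z₁' - w₁'‖ ≤ ε := by
        have h4 := hw₁'d
        rw [Complex.dist_eq] at h4
        linarith only [h4]
      linarith only [h1, h3]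
    have hineq1 : ∀ t' ∈ (fun w => (τ * w).im) '' E',
        Real.sin θ * (t' - (τ * z₁).im) ≤
          IEMWandering.vDec σ β γ a d τ' - IEMWandering.vDec σ β γ a d' τ' := by
      rintro _ ⟨w', hw', rfl⟩
      have hu := hupper' w' hw'
      have hl := hlow
      simp only
      linarith only [hu, hl]
    have hineq2 : ∀ t ∈ (fun w => (τ * w).im) '' E,
        Real.sin θ * (t - (τ * z₁').im) ≤
          -(IEMWandering.vDec σ β γ a d τ' - IEMWandering.vDec σ β γ a d' τ') := by
      rintro _ ⟨w, hw, rfl⟩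
      have hu := hupper w hw
      have hl := hlow'
      simp only
      linarith only [hu, hl]
    have hcore := CLAux.lemC' (D := D) (s := Real.sin θ) (ε := ε)
      (t₁ := (τ * z₁).im) (t₁' := (τ * z₁').im)
      (Δ := IEMWandering.vDec σ β γ a d τ' - IEMWandering.vDec σ β γ a d' τ')
      hsep hDpos hε0.le
      ⟨(τ * w₁).im, ⟨w₁, hw₁E, rfl⟩, htclose⟩
      ⟨(τ * w₁').im, ⟨w₁', hw₁'E', rfl⟩, htclose'⟩
      hineq1 hineq2
    have hfinal : (1 - ε) * (D - ε) * |θ| ≤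
        |IEMWandering.vDec σ β γ a d τ' - IEMWandering.vDec σ β γ a d' τ'| := by
      have h1 : (1 - ε) * |θ| * (D - ε) ≤ |Real.sin θ| * (D - ε) :=
        mul_le_mul_of_nonneg_right hsabs (by linarith only [hεD])
      calc (1 - ε) * (D - ε) * |θ| = (1 - ε) * |θ| * (D - ε) := by ring
        _ ≤ |Real.sin θ| * (D - ε) := h1
        _ ≤ _ := hcore
    have hbound : (D + b)/2 ≤ (1 - ε) * (D - ε) := by linarith only [hεb2, sq_nonneg ε]
    have hrlt : b < |IEMWandering.vDec σ β γ a d τ' - IEMWandering.vDec σ β γ a d' τ'| /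
        IEMWandering.arcDist τ τ' := by
      rw [harc k, ← hθdef, lt_div_iff₀ hθpos]
      have h1 : b * |θ| < (D + b)/2 * |θ| := by
        apply mul_lt_mul_of_pos_right _ hθpos
        linarith only [hb]
      calc b * |θ| < (D + b)/2 * |θ| := h1
        _ ≤ (1 - ε) * (D - ε) * |θ| := mul_le_mul_of_nonneg_right hbound (abs_nonneg θ)
        _ ≤ _ := hfinal
    exact_mod_cast hrlt
  have hge : ∀ b : ℝ, b < D → (b : EReal) ≤ Filter.liminf (fun k : ℕ =>
      ((|IEMWandering.vDec σ β γ a d (τk k) - IEMWandering.vDec σ β γ a d' (τk k)| /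
          IEMWandering.arcDist τ (τk k) : ℝ) : EReal)) Filter.atTop := fun b hb =>
    Filter.le_liminf_of_le (by isBoundedDefault) ((hmain b hb).mono fun k h => h.le)
  refine le_of_forall_lt fun x hx => ?_
  induction x using EReal.rec with
  | bot => exact lt_of_lt_of_le (EReal.bot_lt_coe (D - 1)) (hge (D - 1) (by linarith only [hDpos]))
  | coe y =>
      have hy : y < D := by exact_mod_cast hx
      refine lt_of_lt_of_le ?_ (hge ((y + D)/2) (by linarith only [hy]))
      exact_mod_cast (by linarith only [hy] : y < (y + D)/2)
  | top => exact absurd hx (by simp)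
end
end
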